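/- arXiv:2505.18061 — 7 statements merged into one kernel-verified Lean document; each statement's English description precedes it below -/
import Mathlib

section
/- For every positive integer k, every real y > 0, and for P(y, m) := ∑_{j=0}^{m} e^{-y} y^j / j! (the CDF of a Poisson random variable with mean y evaluated at m), it holds that y · P(y, k-1) ≤ k · P(y, k). -/
theorem stmt1 (k : ℕ) (hk : 0 < k) (y : ℝ) (hy : 0 < y) :
    y * ∑ j ∈ Finset.range k, Real.exp (-y) * y ^ j / (Nat.factorial j : ℝ)
      ≤ (k : ℝ) * ∑ j ∈ Finset.range (k + 1), Real.exp (-y) * y ^ j / (Nat.factorial j : ℝ) := by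
  have hterm : ∀ j : ℕ, 0 ≤ Real.exp (-y) * y ^ j / (Nat.factorial j : ℝ) := by
    intro j
    positivity
  calc y * ∑ j ∈ Finset.range k, Real.exp (-y) * y ^ j / (Nat.factorial j : ℝ)
      = ∑ j ∈ Finset.range k, y * (Real.exp (-y) * y ^ j / (Nat.factorial j : ℝ)) := by
        rw [Finset.mul_sum]
    _ = ∑ j ∈ Finset.range k,
        ((j : ℝ) + 1) * (Real.exp (-y) * y ^ (j + 1) / (Nat.factorial (j + 1) : ℝ)) := by
        apply Finset.sum_congr rfl
        intro j _
        have hfac : (Nat.factorial (j + 1) : ℝ) = ((j : ℝ) + 1) * (Nat.factorial j : ℝ) := by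
          rw [Nat.factorial_succ]; push_cast; ring
        have h1 : (Nat.factorial j : ℝ) ≠ 0 := by positivity
        have h2 : ((j : ℝ) + 1) ≠ 0 := by positivity
        rw [hfac]
        field_simp
        ring
    _ ≤ ∑ j ∈ Finset.range k,
        (k : ℝ) * (Real.exp (-y) * y ^ (j + 1) / (Nat.factorial (j + 1) : ℝ)) := by
        apply Finset.sum_le_sum
        intro j hj
        have : (j : ℝ) + 1 ≤ (k : ℝ) := by
          have := Finset.mem_range.mp hj
          exact_mod_cast Nat.succ_le_of_lt this
        exact mul_le_mul_of_nonneg_right this (hterm (j + 1))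
    _ = (k : ℝ) * ∑ j ∈ Finset.range k,
        Real.exp (-y) * y ^ (j + 1) / (Nat.factorial (j + 1) : ℝ) := by
        rw [Finset.mul_sum]
    _ ≤ (k : ℝ) * ∑ j ∈ Finset.range (k + 1),
        Real.exp (-y) * y ^ j / (Nat.factorial j : ℝ) := by
        apply mul_le_mul_of_nonneg_left _ (by positivity)
        rw [Finset.sum_range_succ' (fun j => Real.exp (-y) * y ^ j / (Nat.factorial j : ℝ)) k]
        have h0 := hterm 0
        nlinarith [h0]
end

section
/- For every positive integer k and every α ∈ (1, ∞), the quantity (Γ(k)/Γ(k+1-1/α)) · max over U ∈ (0,∞) of U · exp(-U^{-α}) · ∑_{j=1}^{k} ∑_{s=j}^{∞} U^{-sα}/s! is at least 1 - 1/√(2πk). -/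
open Finset Real Filter

lemma tele (x : ℝ) (n : ℕ) :
    ∑ s ∈ range n, (x - s) * x ^ s / s.factorial = n * x ^ n / n.factorial := by
  have h := Finset.sum_range_sub (fun s => (s : ℝ) * x ^ s / s.factorial) n
  have h2 : ∑ s ∈ range n, (x - s) * x ^ s / s.factorial =
      ∑ i ∈ range n, (((i+1 : ℕ) : ℝ) * x ^ (i+1) / (i+1).factorial - (i:ℝ) * x ^ i / i.factorial) := by
    apply Finset.sum_congr rfl
    intro s _
    have hs : (s.factorial : ℝ) ≠ 0 := by positivity
    rw [Nat.factorial_succ]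
    push_cast
    field_simp
    ring
  rw [h2, h]
  simp

lemma swap_sum (f : ℕ → ℝ) (k : ℕ) :
    ∑ j ∈ range k, ∑ i ∈ range (j + 1), f i = ∑ i ∈ range k, ((k : ℝ) - i) * f i := by
  induction k with
  | zero => simp
  | succ n ih =>
    rw [Finset.sum_range_succ, ih]
    have h : ∀ i ∈ range (n+1), (((n+1 : ℕ):ℝ) - i) * f i = ((n:ℝ) - i) * f i + f i := by
      intro i _; push_cast; ring
    rw [Finset.sum_congr rfl h, Finset.sum_add_distrib,
      Finset.sum_range_succ (fun i => ((n:ℝ) - i) * f i)]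
    simp

lemma stirling_lb (k : ℕ) (hk : 0 < k) :
    Real.sqrt (2 * Real.pi * k) * (k : ℝ) ^ k * Real.exp (-(k:ℝ)) ≤ (k.factorial : ℝ) := by
  obtain ⟨m, rfl⟩ := Nat.exists_eq_add_of_lt hk
  simp only [zero_add]
  have h1 : Real.sqrt π ≤ Stirling.stirlingSeq (m + 1) := by
    have ht : Tendsto (Stirling.stirlingSeq ∘ Nat.succ) atTop (nhds (Real.sqrt π)) :=
      Stirling.tendsto_stirlingSeq_sqrt_pi.comp (tendsto_add_atTop_nat 1)
    exact Stirling.stirlingSeq'_antitone.le_of_tendsto ht m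
  set n : ℕ := m + 1 with hn
  have hnpos : (0:ℝ) < n := by positivity
  rw [Stirling.stirlingSeq] at h1
  have hden : 0 < Real.sqrt (2 * n) * ((n:ℝ) / Real.exp 1) ^ n := by positivity
  rw [le_div_iff₀ hden] at h1
  calc Real.sqrt (2 * π * n) * (n : ℝ) ^ n * Real.exp (-(n:ℝ))
      = Real.sqrt π * (Real.sqrt (2 * n) * ((n:ℝ) / Real.exp 1) ^ n) := by
        rw [show 2 * π * (n:ℝ) = π * (2 * n) by ring, Real.sqrt_mul pi_pos.le,
          Real.exp_neg, div_pow, ← Real.exp_one_pow]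
        have : Real.exp 1 ^ n ≠ 0 := by positivity
        field_simp
    _ ≤ (n.factorial : ℝ) := h1

theorem stmt4 (k : ℕ) (hk : 0 < k) (α : ℝ) (hα : 1 < α) :
    ∃ U : ℝ, 0 < U ∧
      Real.Gamma (k : ℝ) / Real.Gamma ((k : ℝ) + 1 - 1/α) *
          (U * Real.exp (-U ^ (-α)) *
            ∑ j ∈ Finset.Icc 1 k,
              ∑' s : ℕ, U ^ (-(((s + j : ℕ) : ℝ)) * α) / (Nat.factorial (s + j) : ℝ))
        ≥ 1 - 1 / Real.sqrt (2 * Real.pi * k) := by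
  have hK : (0:ℝ) < (k:ℝ) := by exact_mod_cast hk
  have hα0 : (0:ℝ) < α := by linarith
  have ha : (0:ℝ) < 1/α := by positivity
  have ha1 : 1/α < 1 := by rw [div_lt_one hα0]; exact hα
  set K : ℝ := (k:ℝ) with hKdef
  set U : ℝ := K ^ (-(1/α)) with hUdef
  have hU : 0 < U := Real.rpow_pos_of_pos hK _
  refine ⟨U, hU, ?_⟩
  have hUα : U ^ (-α) = K := by
    rw [hUdef, ← Real.rpow_mul hK.le]
    have : -(1/α) * -α = 1 := by field_simp
    rw [this, Real.rpow_one]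
  have hUm : ∀ m : ℕ, U ^ (-(m:ℝ) * α) = K ^ m := by
    intro m
    rw [hUdef, ← Real.rpow_mul hK.le]
    have : -(1/α) * (-(m:ℝ) * α) = (m:ℝ) := by field_simp
    rw [this, Real.rpow_natCast]
  have hf : Summable (fun n : ℕ => K ^ n / (n.factorial : ℝ)) := Real.summable_pow_div_factorial K
  have hexp : ∑' n : ℕ, K ^ n / (n.factorial : ℝ) = Real.exp K := by
    rw [Real.exp_eq_exp_ℝ, NormedSpace.exp_eq_tsum_div]
  have htail : ∀ j : ℕ, (∑' s : ℕ, U ^ (-(((s + j : ℕ) : ℝ)) * α) / (Nat.factorial (s + j) : ℝ))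
      = Real.exp K - ∑ i ∈ Finset.range j, K ^ i / (i.factorial : ℝ) := by
    intro j
    have h1 : (fun s : ℕ => U ^ (-(((s + j : ℕ) : ℝ)) * α) / (Nat.factorial (s + j) : ℝ))
        = fun s : ℕ => K ^ (s + j) / (((s+j).factorial : ℕ) : ℝ) := by
      funext s; rw [hUm (s + j)]
    rw [h1]
    have h2 := hf.sum_add_tsum_nat_add j
    rw [hexp] at h2
    linarith
  have hS : (∑ j ∈ Finset.Icc 1 k,
        ∑' s : ℕ, U ^ (-(((s + j : ℕ) : ℝ)) * α) / (Nat.factorial (s + j) : ℝ))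
      = (k:ℝ) * Real.exp K - (k:ℝ) * K ^ k / (k.factorial : ℝ) := by
    calc (∑ j ∈ Finset.Icc 1 k,
          ∑' s : ℕ, U ^ (-(((s + j : ℕ) : ℝ)) * α) / (Nat.factorial (s + j) : ℝ))
        = ∑ j ∈ Finset.Icc 1 k, (Real.exp K - ∑ i ∈ Finset.range j, K ^ i / (i.factorial : ℝ)) :=
          Finset.sum_congr rfl (fun j _ => htail j)
      _ = ∑ i ∈ range k, (Real.exp K - ∑ t ∈ Finset.range (i+1), K ^ t / (t.factorial : ℝ)) := by
          rw [← Finset.Ico_add_one_right_eq_Icc, Finset.sum_Ico_eq_sum_range]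
          simp [Nat.add_comm]
      _ = (k:ℝ) * Real.exp K - ∑ i ∈ range k, ∑ t ∈ Finset.range (i+1), K ^ t / (t.factorial : ℝ) := by
          rw [Finset.sum_sub_distrib, Finset.sum_const]
          simp [mul_comm]
      _ = (k:ℝ) * Real.exp K - (k:ℝ) * K ^ k / (k.factorial : ℝ) := by
          rw [swap_sum (fun t => K ^ t / (t.factorial : ℝ)) k]
          congr 1
          rw [← tele K k]
          apply Finset.sum_congr rfl
          intro i _
          rw [hKdef]
          ring
  -- Gamma bound (Gautschi via log-convexity)
  have hΓK : 0 < Real.Gamma K := Real.Gamma_pos_of_pos hK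
  have hΓs : 0 < Real.Gamma (K + 1 - 1/α) := Real.Gamma_pos_of_pos (by linarith)
  have hGamma : Real.Gamma (K + 1 - 1/α) ≤ Real.Gamma K * K ^ (1 - 1/α) := by
    have hc := Real.convexOn_log_Gamma.2 (Set.mem_Ioi.mpr hK)
      (Set.mem_Ioi.mpr (show (0:ℝ) < K + 1 by linarith)) ha.le
      (show (0:ℝ) ≤ 1 - 1/α by linarith) (by ring)
    simp only [smul_eq_mul, Function.comp_apply] at hc
    rw [show 1/α * K + (1 - 1/α) * (K + 1) = K + 1 - 1/α by ring] at hc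
    rw [Real.Gamma_add_one (ne_of_gt hK), Real.log_mul (ne_of_gt hK) (ne_of_gt hΓK)] at hc
    have hlog : Real.log (Real.Gamma (K + 1 - 1/α)) ≤ Real.log (Real.Gamma K * K ^ (1 - 1/α)) := by
      rw [Real.log_mul (ne_of_gt hΓK) (by positivity), Real.log_rpow hK]
      linarith
    exact (Real.log_le_log_iff hΓs (by positivity)).mp hlog
  have hPU : 1/K ≤ Real.Gamma K / Real.Gamma (K + 1 - 1/α) * U := by
    have h1 : K ^ (-(1 - 1/α)) ≤ Real.Gamma K / Real.Gamma (K + 1 - 1/α) := by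
      rw [le_div_iff₀ hΓs]
      calc K ^ (-(1 - 1/α)) * Real.Gamma (K + 1 - 1/α)
          ≤ K ^ (-(1 - 1/α)) * (Real.Gamma K * K ^ (1 - 1/α)) :=
            mul_le_mul_of_nonneg_left hGamma (by positivity)
        _ = Real.Gamma K * (K ^ (-(1 - 1/α)) * K ^ (1 - 1/α)) := by ring
        _ = Real.Gamma K := by
            rw [← Real.rpow_add hK]
            norm_num
    calc (1:ℝ)/K = K ^ (-(1 - 1/α)) * U := by
          rw [hUdef, ← Real.rpow_add hK]
          rw [show -(1 - 1/α) + -(1/α) = -1 by ring, Real.rpow_neg_one]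
          rw [one_div]
      _ ≤ Real.Gamma K / Real.Gamma (K + 1 - 1/α) * U :=
          mul_le_mul_of_nonneg_right h1 hU.le
  have hterm : K ^ k / (k.factorial : ℝ) ≤ Real.exp K := by
    rw [← hexp]
    exact hf.le_tsum k (fun i _ => by positivity)
  have hSnn : 0 ≤ Real.exp (-K) * ((k:ℝ) * Real.exp K - (k:ℝ) * K ^ k / (k.factorial : ℝ)) := by
    apply mul_nonneg (Real.exp_nonneg _)
    have h3 : (k:ℝ) * (K ^ k / (k.factorial : ℝ)) ≤ (k:ℝ) * Real.exp K :=
      mul_le_mul_of_nonneg_left hterm hK.le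
    rw [mul_div_assoc]
    linarith
  have hfac : (0:ℝ) < (k.factorial : ℝ) := by positivity
  have hsqrt : (0:ℝ) < Real.sqrt (2 * π * K) := by
    apply Real.sqrt_pos.mpr; positivity
  have hstir : K ^ k * Real.exp (-K) / (k.factorial : ℝ) ≤ 1 / Real.sqrt (2 * π * K) := by
    rw [div_le_div_iff₀ hfac hsqrt]
    have := stirling_lb k hk
    rw [← hKdef] at this
    nlinarith
  rw [hUα, hS]
  calc Real.Gamma K / Real.Gamma (K + 1 - 1/α) *
        (U * Real.exp (-K) * ((k:ℝ) * Real.exp K - (k:ℝ) * K ^ k / (k.factorial : ℝ)))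
      = (Real.Gamma K / Real.Gamma (K + 1 - 1/α) * U) *
        (Real.exp (-K) * ((k:ℝ) * Real.exp K - (k:ℝ) * K ^ k / (k.factorial : ℝ))) := by ring
    _ ≥ (1/K) * (Real.exp (-K) * ((k:ℝ) * Real.exp K - (k:ℝ) * K ^ k / (k.factorial : ℝ))) :=
        mul_le_mul_of_nonneg_right hPU hSnn
    _ = 1 - K ^ k * Real.exp (-K) / (k.factorial : ℝ) := by
        have hKne : K ≠ 0 := ne_of_gt hK
        have h1 : Real.exp (-K) * Real.exp K = 1 := by
          rw [← Real.exp_add]; simp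
        have h2 : (1/K) * (Real.exp (-K) * ((k:ℝ) * Real.exp K - (k:ℝ) * K ^ k / (k.factorial : ℝ)))
            = Real.exp (-K) * Real.exp K - K ^ k * Real.exp (-K) / (k.factorial : ℝ) := by
          have hfne : (k.factorial : ℝ) ≠ 0 := ne_of_gt hfac
          rw [← hKdef]
          field_simp
        rw [h2, h1]
    _ ≥ 1 - 1 / Real.sqrt (2 * π * K) := by linarith
end

section
/- For every positive integer k, the function f_k(y) = y·exp(-y^{-2})·∑_{j=1}^{k}∑_{s=j}^{∞} y^{-2s}/s! on (0,∞) has derivative f_k'(y) = k(1 - P(y^{-2}, k)) - y^{-2} P(y^{-2}, k-1), where P(x, m) = ∑_{j=0}^{m} e^{-x} x^j / j!. -/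
open Finset

private noncomputable def Apoly (n : ℕ) (u : ℝ) : ℝ := ∑ m ∈ Finset.range n, u ^ m / (Nat.factorial m : ℝ)

private lemma Apoly_deriv (n : ℕ) (u : ℝ) :
    HasDerivAt (Apoly (n + 1)) (Apoly n u) u := by
  induction n with
  | zero =>
      have : Apoly 1 = fun _ : ℝ => (1 : ℝ) := by
        funext v; simp [Apoly]
      rw [this]
      simpa [Apoly] using (hasDerivAt_const u (1 : ℝ))
  | succ n ih =>
      have h1 : HasDerivAt (fun v : ℝ => v ^ (n + 1) / (Nat.factorial (n + 1) : ℝ))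
          (u ^ n / (Nat.factorial n : ℝ)) u := by
        have := (hasDerivAt_pow (n + 1) u).div_const (Nat.factorial (n + 1) : ℝ)
        refine this.congr_deriv ?_
        rw [Nat.factorial_succ]; push_cast
        field_simp
      have : HasDerivAt (fun v => Apoly (n + 1) v + v ^ (n + 1) / (Nat.factorial (n + 1) : ℝ))
          (Apoly n u + u ^ n / (Nat.factorial n : ℝ)) u := ih.add h1
      have heq : (fun v => Apoly (n + 1) v + v ^ (n + 1) / (Nat.factorial (n + 1) : ℝ))
          = Apoly (n + 2) := by
        funext v; simp [Apoly, Finset.sum_range_succ]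
      rw [heq] at this
      have heq2 : Apoly n u + u ^ n / (Nat.factorial n : ℝ) = Apoly (n + 1) u := by
        simp [Apoly, Finset.sum_range_succ]
      rwa [heq2] at this


private lemma IccInsert (k : ℕ) : Finset.Icc 1 (k + 1) = insert (k + 1) (Finset.Icc 1 k) := by
  ext n; simp [Finset.mem_Icc, Finset.mem_insert]; omega

private lemma sum_Icc_one (k : ℕ) (f : ℕ → ℝ) :
    ∑ j ∈ Finset.Icc 1 k, f j = ∑ m ∈ Finset.range k, f (m + 1) := by
  induction k with
  | zero => simp
  | succ k ih =>
      rw [IccInsert, Finset.sum_insert (by simp), ih, Finset.sum_range_succ]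
      ring

private lemma Apoly_identity (k : ℕ) (hk : 0 < k) (x : ℝ) :
    (∑ j ∈ Finset.Icc 1 k, Apoly j x) + x * Apoly k x = (k : ℝ) * Apoly (k + 1) x := by
  induction k with
  | zero => exact absurd hk (lt_irrefl 0)
  | succ k ih =>
      rcases Nat.eq_zero_or_pos k with hk0 | hk0
      · subst hk0
        simp [Apoly, Finset.sum_range_succ]
      · have ihh := ih hk0
        have hIcc : Finset.Icc 1 (k + 1) = insert (k + 1) (Finset.Icc 1 k) := by
          exact IccInsert k
        rw [hIcc, Finset.sum_insert (by simp)]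
        have hT : (∑ j ∈ Finset.Icc 1 k, Apoly j x) = (k : ℝ) * Apoly (k + 1) x - x * Apoly k x := by
          linarith [ihh]
        rw [hT]
        have hAk1 : Apoly (k + 1) x = Apoly k x + x ^ k / (Nat.factorial k : ℝ) := by
          simp [Apoly, Finset.sum_range_succ]
        have hAk2 : Apoly (k + 2) x = Apoly (k + 1) x + x ^ (k + 1) / (Nat.factorial (k + 1) : ℝ) := by
          simp [Apoly, Finset.sum_range_succ]
        have hfac : (Nat.factorial (k + 1) : ℝ) = (k + 1 : ℝ) * (Nat.factorial k : ℝ) := by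
          rw [Nat.factorial_succ]; push_cast; ring
        have hfk : (Nat.factorial k : ℝ) ≠ 0 := Nat.cast_ne_zero.mpr (Nat.factorial_ne_zero k)
        have hx1 : x * (x ^ k / (Nat.factorial k : ℝ))
            = ((k : ℝ) + 1) * (x ^ (k + 1) / (Nat.factorial (k + 1) : ℝ)) := by
          rw [hfac]
          field_simp
          ring
        rw [hAk2]
        push_cast
        linear_combination x * hAk1 + hx1

theorem stmt9 (k : ℕ) (hk : 0 < k) (y : ℝ) (hy : 0 < y) :
    HasDerivAt
      (fun t : ℝ => t * Real.exp (-t ^ (-2 : ℝ)) *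
        ∑ j ∈ Finset.Icc 1 k,
          ∑' s : ℕ, t ^ (-2 * (((s + j : ℕ) : ℝ))) / (Nat.factorial (s + j) : ℝ))
      ((k : ℝ) * (1 - ∑ j ∈ Finset.range (k + 1),
            Real.exp (-(y ^ (-2 : ℝ))) * (y ^ (-2 : ℝ)) ^ j / (Nat.factorial j : ℝ))
        - y ^ (-2 : ℝ) * ∑ j ∈ Finset.range k,
            Real.exp (-(y ^ (-2 : ℝ))) * (y ^ (-2 : ℝ)) ^ j / (Nat.factorial j : ℝ))
      y := by
  classical
  set x : ℝ := y ^ (-2 : ℝ) with hxdef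
  -- the nicer function F
  set F : ℝ → ℝ := fun t => t * ((k : ℝ) - Real.exp (-(t ^ (-2 : ℝ))) *
      ∑ j ∈ Finset.Icc 1 k, Apoly j (t ^ (-2 : ℝ))) with hF
  -- exp as tsum
  have hexp : ∀ u : ℝ, Real.exp u = ∑' n : ℕ, u ^ n / (Nat.factorial n : ℝ) := by
    intro u
    rw [Real.exp_eq_exp_ℝ, NormedSpace.exp_eq_tsum_div]
  -- eventual equality
  have heq : ∀ᶠ t in nhds y, (fun t : ℝ => t * Real.exp (-t ^ (-2 : ℝ)) *
        ∑ j ∈ Finset.Icc 1 k,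
          ∑' s : ℕ, t ^ (-2 * (((s + j : ℕ) : ℝ))) / (Nat.factorial (s + j) : ℝ)) t = F t := by
    filter_upwards [eventually_gt_nhds hy] with t ht
    have hxt : (0 : ℝ) ≤ t ^ (-2 : ℝ) := Real.rpow_nonneg ht.le _
    have hterm : ∀ n : ℕ, t ^ (-2 * ((n : ℕ) : ℝ)) = (t ^ (-2 : ℝ)) ^ n := by
      intro n
      rw [Real.rpow_mul ht.le, Real.rpow_natCast]
    have htsum : ∀ j : ℕ, (∑' s : ℕ, t ^ (-2 * (((s + j : ℕ) : ℝ))) / (Nat.factorial (s + j) : ℝ))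
        = Real.exp (t ^ (-2 : ℝ)) - Apoly j (t ^ (-2 : ℝ)) := by
      intro j
      have hsum := Real.summable_pow_div_factorial (t ^ (-2 : ℝ))
      have key := Summable.sum_add_tsum_nat_add j hsum
      have : (∑' s : ℕ, t ^ (-2 * (((s + j : ℕ) : ℝ))) / (Nat.factorial (s + j) : ℝ))
          = ∑' s : ℕ, (t ^ (-2 : ℝ)) ^ (s + j) / (Nat.factorial (s + j) : ℝ) := by
        congr 1; funext s; rw [hterm]
      rw [this]
      have hxp : (∑' n : ℕ, (t ^ (-2 : ℝ)) ^ n / (Nat.factorial n : ℝ)) = Real.exp (t ^ (-2 : ℝ)) :=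
        (hexp _).symm
      rw [← hxp, ← key]
      simp [Apoly]
    simp only [htsum, Finset.sum_sub_distrib]
    have hcard : (Finset.Icc 1 k).card = k := by simp
    rw [Finset.sum_const, hcard, hF]
    have hee : Real.exp (-t ^ (-2 : ℝ)) * Real.exp (t ^ (-2 : ℝ)) = 1 := by
      rw [← Real.exp_add]; simp
    have : Real.exp (-t ^ (-2 : ℝ)) * ((k : ℕ) • Real.exp (t ^ (-2 : ℝ))
        - ∑ j ∈ Finset.Icc 1 k, Apoly j (t ^ (-2 : ℝ)))
        = (k : ℝ) - Real.exp (-(t ^ (-2 : ℝ))) * ∑ j ∈ Finset.Icc 1 k, Apoly j (t ^ (-2 : ℝ)) := by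
      rw [nsmul_eq_mul]
      linear_combination (k : ℝ) * hee
    rw [mul_assoc, this]
  -- derivative of t ↦ t^(-2)
  have hx : HasDerivAt (fun t : ℝ => t ^ (-2 : ℝ)) (-2 * y ^ (-2 - 1 : ℝ)) y := by
    simpa using Real.hasDerivAt_rpow_const (p := (-2 : ℝ)) (Or.inl hy.ne')
  -- derivative of G
  set T : ℝ → ℝ := fun u => ∑ j ∈ Finset.Icc 1 k, Apoly j u with hTdef
  have hT : HasDerivAt T (∑ j ∈ Finset.Icc 1 k, Apoly (j - 1) x) x := by
    apply HasDerivAt.fun_sum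
    intro j hj
    have hj1 : 1 ≤ j := (Finset.mem_Icc.mp hj).1
    have : j - 1 + 1 = j := by omega
    simpa [this] using Apoly_deriv (j - 1) x
  have hTT' : T x - (∑ j ∈ Finset.Icc 1 k, Apoly (j - 1) x) = Apoly k x := by
    rw [hTdef]
    simp only
    rw [← Finset.sum_sub_distrib]
    rw [sum_Icc_one]
    have : ∀ m ∈ Finset.range k,
        Apoly (m + 1) x - Apoly (m + 1 - 1) x = x ^ m / (Nat.factorial m : ℝ) := by
      intro m _
      have h1 : m + 1 - 1 = m := by omega
      rw [h1]
      simp [Apoly, Finset.sum_range_succ]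
    rw [Finset.sum_congr rfl this]
    rfl
  have hG : HasDerivAt (fun u : ℝ => (k : ℝ) - Real.exp (-u) * T u)
      (Real.exp (-x) * Apoly k x) x := by
    have he : HasDerivAt (fun u : ℝ => Real.exp (-u)) (-Real.exp (-x)) x := by
      simpa using (hasDerivAt_neg x).exp
    have hprod := he.mul hT
    have := (hasDerivAt_const x (k : ℝ)).sub hprod
    refine this.congr_deriv ?_
    rw [← hTT']
    ring
  -- compose
  have hFderiv : HasDerivAt F
      (1 * ((k : ℝ) - Real.exp (-x) * T x)
        + y * (Real.exp (-x) * Apoly k x * (-2 * y ^ (-2 - 1 : ℝ)))) y := by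
    have hc := hG.comp y hx
    exact (hasDerivAt_id y).mul hc
  -- algebra to match the target value
  have hyx : y * (-2 * y ^ (-2 - 1 : ℝ)) = -2 * x := by
    have h1 : y * y ^ (-2 - 1 : ℝ) = y ^ (-2 : ℝ) := by
      nth_rewrite 1 [← Real.rpow_one y]
      rw [← Real.rpow_add hy]
      norm_num
    calc y * (-2 * y ^ (-2 - 1 : ℝ)) = -2 * (y * y ^ (-2 - 1 : ℝ)) := by ring
      _ = -2 * x := by rw [h1, hxdef]
  have hval : 1 * ((k : ℝ) - Real.exp (-x) * T x)
        + y * (Real.exp (-x) * Apoly k x * (-2 * y ^ (-2 - 1 : ℝ)))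
      = ((k : ℝ) * (1 - ∑ j ∈ Finset.range (k + 1),
            Real.exp (-(y ^ (-2 : ℝ))) * (y ^ (-2 : ℝ)) ^ j / (Nat.factorial j : ℝ))
        - y ^ (-2 : ℝ) * ∑ j ∈ Finset.range k,
            Real.exp (-(y ^ (-2 : ℝ))) * (y ^ (-2 : ℝ)) ^ j / (Nat.factorial j : ℝ)) := by
    have hid := Apoly_identity k hk x
    have hA1 : (∑ j ∈ Finset.range (k + 1),
        Real.exp (-(y ^ (-2 : ℝ))) * (y ^ (-2 : ℝ)) ^ j / (Nat.factorial j : ℝ))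
        = Real.exp (-x) * Apoly (k + 1) x := by
      rw [Apoly, Finset.mul_sum, hxdef]
      congr 1; funext j; ring
    have hA2 : (∑ j ∈ Finset.range k,
        Real.exp (-(y ^ (-2 : ℝ))) * (y ^ (-2 : ℝ)) ^ j / (Nat.factorial j : ℝ))
        = Real.exp (-x) * Apoly k x := by
      rw [Apoly, Finset.mul_sum, hxdef]
      congr 1; funext j; ring
    rw [hA1, hA2]
    have hTx : T x = (k : ℝ) * Apoly (k + 1) x - x * Apoly k x := by
      rw [hTdef]; simp only; linarith [hid]
    calc 1 * ((k : ℝ) - Real.exp (-x) * T x)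
          + y * (Real.exp (-x) * Apoly k x * (-2 * y ^ (-2 - 1 : ℝ)))
        = (k : ℝ) - Real.exp (-x) * T x
          + (Real.exp (-x) * Apoly k x) * (y * (-2 * y ^ (-2 - 1 : ℝ))) := by ring
      _ = (k : ℝ) - Real.exp (-x) * T x + (Real.exp (-x) * Apoly k x) * (-2 * x) := by rw [hyx]
      _ = _ := by rw [hTx]; ring
  rw [← hval]
  exact hFderiv.congr_of_eventuallyEq heq
end

section
/- For every positive integer k, k·(1 - P(k+1, k)) - (k+1)·P(k+1, k-1) > 0, where P(y, m) = ∑_{j=0}^{m} e^{-y} y^j / j! is the Poisson CDF with mean y. -/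
open Finset

lemma factAux (n d : ℕ) (h : d < n) :
    Nat.factorial (n + d) ≤ Nat.factorial (n - 1 - d) * n ^ (2 * d + 1) := by
  induction d with
  | zero =>
      have h1 : Nat.factorial n = Nat.factorial (n-1) * n := by
        conv_lhs => rw [show n = (n-1)+1 by omega]
        rw [Nat.factorial_succ, Nat.mul_comm]
        congr 1
        omega
      simpa using h1.le
  | succ d ih =>
      have hd : d < n := by omega
      have ih' := ih hd
      have h2 : n - 1 - d = (n - 1 - (d+1)) + 1 := by omega
      have hfac : Nat.factorial (n - 1 - d) = (n - 1 - d) * Nat.factorial (n - 1 - (d+1)) := by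
        rw [h2, Nat.factorial_succ]
      have key : (n + d + 1) * (n - 1 - d) ≤ n * n := by
        have hnd : n - 1 - d + (d + 1) = n := by omega
        nlinarith [hnd, Nat.sub_le (n-1) d]
      calc Nat.factorial (n + (d+1)) = (n + d + 1) * Nat.factorial (n + d) := by
              rw [show n + (d+1) = (n+d)+1 by omega, Nat.factorial_succ]
        _ ≤ (n + d + 1) * (Nat.factorial (n - 1 - d) * n ^ (2*d+1)) :=
              Nat.mul_le_mul_left _ ih'
        _ = ((n + d + 1) * (n - 1 - d)) * (Nat.factorial (n - 1 - (d+1)) * n ^ (2*d+1)) := by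
              rw [hfac]; ring
        _ ≤ (n * n) * (Nat.factorial (n - 1 - (d+1)) * n ^ (2*d+1)) :=
              Nat.mul_le_mul_right _ key
        _ = Nat.factorial (n - 1 - (d+1)) * n ^ (2*(d+1)+1) := by ring

lemma termPair (n d : ℕ) (h : d < n) :
    (n:ℝ) ^ (n - 1 - d) / Nat.factorial (n - 1 - d) ≤ (n:ℝ) ^ (n + d) / Nat.factorial (n + d) := by
  have hn : 0 < n := by omega
  have hf1 : (0:ℝ) < Nat.factorial (n - 1 - d) := by positivity
  have hf2 : (0:ℝ) < Nat.factorial (n + d) := by positivity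
  rw [div_le_div_iff₀ hf1 hf2]
  have hexp : (n - 1 - d) + (2 * d + 1) = n + d := by omega
  have hkey : (Nat.factorial (n + d) : ℝ) ≤ Nat.factorial (n - 1 - d) * (n:ℝ) ^ (2*d+1) := by
    have := factAux n d h
    calc (Nat.factorial (n + d) : ℝ) ≤ ((Nat.factorial (n - 1 - d) * n ^ (2 * d + 1) : ℕ) : ℝ) := by
          exact_mod_cast this
      _ = Nat.factorial (n - 1 - d) * (n:ℝ) ^ (2*d+1) := by push_cast; ring
  calc (n:ℝ) ^ (n - 1 - d) * Nat.factorial (n + d)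
      ≤ (n:ℝ) ^ (n - 1 - d) * (Nat.factorial (n - 1 - d) * (n:ℝ) ^ (2*d+1)) := by
        apply mul_le_mul_of_nonneg_left hkey (by positivity)
    _ = (n:ℝ) ^ ((n - 1 - d) + (2*d+1)) * Nat.factorial (n - 1 - d) := by
        rw [pow_add]; ring
    _ = (n:ℝ) ^ (n + d) * Nat.factorial (n - 1 - d) := by rw [hexp]

lemma median (n : ℕ) (hn : 0 < n) :
    2 * ∑ j ∈ range n, (n:ℝ) ^ j / Nat.factorial j < Real.exp n := by
  set f : ℕ → ℝ := fun j => (n:ℝ) ^ j / Nat.factorial j with hf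
  have hL : ∑ j ∈ range n, f j ≤ ∑ j ∈ range n, f (n + j) := by
    have hrefl : ∑ j ∈ range n, f (n - 1 - j) = ∑ j ∈ range n, f j :=
      Finset.sum_range_reflect f n
    rw [← hrefl]
    apply Finset.sum_le_sum
    intro j hj
    exact termPair n j (mem_range.mp hj)
  have hsplit : ∑ j ∈ range (n + n), f j = ∑ j ∈ range n, f j + ∑ j ∈ range n, f (n + j) := by
    rw [Finset.sum_range_add]
  have hpos : 0 < f (n + n) := by
    have : (0:ℝ) < (n:ℝ) := by exact_mod_cast hn
    positivity
  have hexp : ∑ j ∈ range (n + n + 1), f j ≤ Real.exp n :=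
    Real.sum_le_exp_of_nonneg (by positivity) _
  rw [Finset.sum_range_succ] at hexp
  rw [hsplit] at hexp
  nlinarith

theorem stmt10 (k : ℕ) (hk : 0 < k) :
    0 < (k : ℝ) * (1 - ∑ j ∈ Finset.range (k + 1),
          Real.exp (-((k : ℝ) + 1)) * ((k : ℝ) + 1) ^ j / (Nat.factorial j : ℝ))
        - ((k : ℝ) + 1) * ∑ j ∈ Finset.range k,
          Real.exp (-((k : ℝ) + 1)) * ((k : ℝ) + 1) ^ j / (Nat.factorial j : ℝ) := by
  set y : ℝ := (k:ℝ) + 1 with hy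
  set E : ℝ := Real.exp (-y) with hE
  have hEpos : 0 < E := Real.exp_pos _
  have hypos : 0 < y := by positivity
  set P : ℝ := ∑ j ∈ Finset.range (k+1), y ^ j / Nat.factorial j with hP
  set Q : ℝ := ∑ j ∈ Finset.range k, y ^ j / Nat.factorial j with hQ
  have hfac1 : ∀ m : Finset ℕ, ∑ j ∈ m, E * y ^ j / Nat.factorial j
      = E * ∑ j ∈ m, y ^ j / Nat.factorial j := by
    intro m
    rw [Finset.mul_sum]
    apply Finset.sum_congr rfl
    intro j _
    ring
  rw [hfac1, hfac1]
  -- median bound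
  have hmed : 2 * P < Real.exp y := by
    have := median (k+1) (by omega)
    have hcast : ((k+1 : ℕ) : ℝ) = y := by push_cast [hy]; ring
    rw [hcast] at this
    exact this
  -- shift inequality : y * Q ≤ k * (P - 1)
  have hshift : y * Q ≤ (k:ℝ) * (P - 1) := by
    have hPsplit : P = 1 + ∑ j ∈ Finset.range k, y ^ (j+1) / Nat.factorial (j+1) := by
      rw [hP, Finset.sum_range_succ']
      simp [Nat.factorial]
      ring
    have : y * Q = ∑ j ∈ Finset.range k, y * (y ^ j / Nat.factorial j) := by
      rw [hQ, Finset.mul_sum]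
    rw [this, hPsplit]
    have hb : ∀ j ∈ Finset.range k, y * (y ^ j / Nat.factorial j)
        ≤ (k:ℝ) * (y ^ (j+1) / Nat.factorial (j+1)) := by
      intro j hj
      have hjk : (j:ℝ) + 1 ≤ (k:ℝ) := by
        have := Finset.mem_range.mp hj
        exact_mod_cast this
      have hfj : (0:ℝ) < Nat.factorial j := by positivity
      have hfs : (Nat.factorial (j+1) : ℝ) = ((j:ℝ)+1) * Nat.factorial j := by
        rw [Nat.factorial_succ]; push_cast; ring
      have h1 : y * (y ^ j / Nat.factorial j) = ((j:ℝ)+1) * (y ^ (j+1) / Nat.factorial (j+1)) := by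
        rw [hfs]
        field_simp
        ring
      rw [h1]
      apply mul_le_mul_of_nonneg_right hjk
      positivity
    calc ∑ j ∈ Finset.range k, y * (y ^ j / Nat.factorial j)
        ≤ ∑ j ∈ Finset.range k, (k:ℝ) * (y ^ (j+1) / Nat.factorial (j+1)) :=
          Finset.sum_le_sum hb
      _ = (k:ℝ) * ∑ j ∈ Finset.range k, y ^ (j+1) / Nat.factorial (j+1) := by
          rw [Finset.mul_sum]
      _ = (k:ℝ) * (1 + ∑ j ∈ Finset.range k, y ^ (j+1) / Nat.factorial (j+1) - 1) := by ring
  rw [← hP, ← hQ]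
  have hEexp : E * Real.exp y = 1 := by
    rw [hE, ← Real.exp_add]
    simp
  have hkpos : (0:ℝ) < k := by exact_mod_cast hk
  nlinarith [mul_le_mul_of_nonneg_left hshift hEpos.le,
    mul_lt_mul_of_pos_left hmed hEpos, mul_pos hkpos hEpos]
end

section
/- For every positive integer k, ∑_{j=0}^{k-1} (k+1)^j / j! ≤ (1/2) e^{k+1} - (k+1)^k / k! and (1/2) e^{k+1} - (k+1)^k / k! < 2 k^{k+1} / k!... specifically: ∑_{j=0}^{k-1} (k+1)^j / j! < 2·k^{k+1}/k!. -/
open Finset Real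

namespace Stmt15

noncomputable def t (k j : ℕ) : ℝ := ((k : ℝ) + 1) ^ j / (Nat.factorial j : ℝ)

lemma t_nonneg (k j : ℕ) : 0 ≤ t k j := by
  unfold t; positivity

lemma fact_bound (k : ℕ) : ∀ i, i ≤ k →
    Nat.factorial (k + 1 + i) ≤ (k + 1) ^ (2 * i + 1) * Nat.factorial (k - i) := by
  intro i
  induction i with
  | zero => intro _; simp [Nat.factorial_succ]
  | succ i ih =>
    intro hik
    obtain ⟨j, hj⟩ := Nat.exists_eq_add_of_le hik
    have h2 : k - i = j + 1 := by omega
    have h3 : k - (i + 1) = j := by omega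
    have ih' := ih (by omega)
    rw [h2] at ih'
    have hkey : (k + 1 + i + 1) * (j + 1) ≤ (k + 1) ^ 2 := by nlinarith [hj]
    calc Nat.factorial (k + 1 + (i + 1))
        = (k + 1 + i + 1) * Nat.factorial (k + 1 + i) := by
          rw [show k + 1 + (i + 1) = (k + 1 + i) + 1 by ring, Nat.factorial_succ]
      _ ≤ (k + 1 + i + 1) * ((k + 1) ^ (2 * i + 1) * Nat.factorial (j + 1)) :=
          Nat.mul_le_mul_left _ ih'
      _ = ((k + 1 + i + 1) * (j + 1)) * ((k + 1) ^ (2 * i + 1) * Nat.factorial j) := by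
          rw [Nat.factorial_succ]; ring
      _ ≤ ((k + 1) ^ 2) * ((k + 1) ^ (2 * i + 1) * Nat.factorial j) := by
          exact Nat.mul_le_mul_right _ hkey
      _ = (k + 1) ^ (2 * (i + 1) + 1) * Nat.factorial (k - (i + 1)) := by
          rw [h3, ← mul_assoc, ← pow_add]
          congr 2
          ring

lemma term_mirror (k i : ℕ) (hik : i ≤ k) : t k (k - i) ≤ t k (k + 1 + i) := by
  unfold t
  rw [div_le_div_iff₀ (by positivity) (by positivity)]
  have hb' : (Nat.factorial (k + 1 + i) : ℝ)
      ≤ ((k : ℝ) + 1) ^ (2 * i + 1) * (Nat.factorial (k - i) : ℝ) := by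
    exact_mod_cast fact_bound k i hik
  have hx : (0:ℝ) ≤ ((k : ℝ) + 1) ^ (k - i) := by positivity
  calc ((k : ℝ) + 1) ^ (k - i) * (Nat.factorial (k + 1 + i) : ℝ)
      ≤ ((k : ℝ) + 1) ^ (k - i) * (((k : ℝ) + 1) ^ (2 * i + 1) * (Nat.factorial (k - i) : ℝ)) :=
        mul_le_mul_of_nonneg_left hb' hx
    _ = ((k : ℝ) + 1) ^ (k + 1 + i) * (Nat.factorial (k - i) : ℝ) := by
        rw [← mul_assoc, ← pow_add]
        congr 2
        omega

lemma mirror_sum (k : ℕ) :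
    ∑ j ∈ range (k + 1), t k j ≤ ∑ i ∈ range (k + 1), t k (k + 1 + i) := by
  have h := Finset.sum_range_reflect (t k) (k + 1)
  simp only [Nat.add_sub_cancel] at h
  calc ∑ j ∈ range (k + 1), t k j
      = ∑ j ∈ range (k + 1), t k (k - j) := h.symm
    _ ≤ _ := Finset.sum_le_sum fun i hi =>
        term_mirror k i (by simp only [Finset.mem_range] at hi; omega)

lemma sum_t_le_exp (k n : ℕ) : ∑ j ∈ range n, t k j ≤ Real.exp ((k : ℝ) + 1) := by
  unfold t
  exact Real.sum_le_exp_of_nonneg (by positivity) n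

lemma part1 (k : ℕ) :
    2 * ∑ j ∈ range (k + 1), t k j ≤ Real.exp ((k : ℝ) + 1) := by
  have hsplit : ∑ j ∈ range ((k + 1) + (k + 1)), t k j
      = ∑ j ∈ range (k + 1), t k j + ∑ i ∈ range (k + 1), t k (k + 1 + i) :=
    Finset.sum_range_add (t k) (k + 1) (k + 1)
  have h1 := sum_t_le_exp k ((k + 1) + (k + 1))
  have h2 := mirror_sum k
  linarith

lemma summable_t (k : ℕ) : Summable (t k) := Real.summable_pow_div_factorial _

lemma t_succ (k n : ℕ) : t k (n + 1) = t k n * (((k : ℝ) + 1) / (n + 1)) := by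
  unfold t
  rw [Nat.factorial_succ, pow_succ]
  push_cast
  have h1 : (Nat.factorial n : ℝ) ≠ 0 := by positivity
  field_simp

lemma exp_split (k : ℕ) :
    Real.exp ((k : ℝ) + 1)
      = ∑ j ∈ range (k + 1), t k j + ∑' i, t k (i + (k + 1)) := by
  have h := Summable.sum_add_tsum_nat_add (f := t k) (k + 1) (summable_t k)
  have he : Real.exp ((k : ℝ) + 1) = ∑' j, t k j := by
    rw [Real.exp_eq_exp_ℝ, NormedSpace.exp_eq_tsum_div]
    rfl
  rw [he, ← h]

lemma H_le_T (k : ℕ) :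
    ∑ j ∈ range (k + 1), t k j ≤ ∑' i, t k (i + (k + 1)) := by
  refine (mirror_sum k).trans ?_
  have hs : Summable (fun i => t k (i + (k + 1))) :=
    (summable_nat_add_iff (k + 1)).mpr (summable_t k)
  calc ∑ i ∈ range (k + 1), t k (k + 1 + i)
      = ∑ i ∈ range (k + 1), t k (i + (k + 1)) := by
        apply Finset.sum_congr rfl; intro i _; congr 1; ring
    _ ≤ ∑' i, t k (i + (k + 1)) :=
        Summable.sum_le_tsum _ (fun i _ => t_nonneg k _) hs

lemma tail_geom (k : ℕ) : ∀ i, t k (i + (k + 2)) ≤ t k (k + 2) * (((k : ℝ) + 1) / ((k : ℝ) + 3)) ^ i := by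
  intro i
  induction i with
  | zero => simp
  | succ i ih =>
    have hr : ((k : ℝ) + 1) / ((i : ℝ) + (k : ℝ) + 3) ≤ ((k : ℝ) + 1) / ((k : ℝ) + 3) := by
      apply div_le_div_of_nonneg_left (by positivity) (by positivity)
      have : (0:ℝ) ≤ (i : ℝ) := Nat.cast_nonneg i
      linarith
    have hstep : t k (i + 1 + (k + 2)) = t k (i + (k + 2)) * (((k : ℝ) + 1) / ((i : ℝ) + (k : ℝ) + 3)) := by
      have := t_succ k (i + (k + 2))
      rw [show i + 1 + (k + 2) = (i + (k + 2)) + 1 by ring, this]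
      push_cast
      ring_nf
    rw [hstep, pow_succ]
    have h0 : 0 ≤ t k (i + (k + 2)) := t_nonneg _ _
    calc t k (i + (k + 2)) * (((k : ℝ) + 1) / ((i : ℝ) + (k : ℝ) + 3))
        ≤ t k (i + (k + 2)) * (((k : ℝ) + 1) / ((k : ℝ) + 3)) :=
          mul_le_mul_of_nonneg_left hr h0
      _ ≤ (t k (k + 2) * (((k : ℝ) + 1) / ((k : ℝ) + 3)) ^ i) * (((k : ℝ) + 1) / ((k : ℝ) + 3)) := by
          apply mul_le_mul_of_nonneg_right ih (by positivity)
      _ = t k (k + 2) * ((((k : ℝ) + 1) / ((k : ℝ) + 3)) ^ i * (((k : ℝ) + 1) / ((k : ℝ) + 3))) := by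
          rw [mul_assoc]

lemma tail_bound (k : ℕ) :
    ∑' i, t k (i + (k + 1)) ≤ t k (k + 1) + t k (k + 2) * (((k : ℝ) + 3) / 2) := by
  have hs1 : Summable (fun i => t k (i + (k + 1))) :=
    (summable_nat_add_iff (k + 1)).mpr (summable_t k)
  have hs2 : Summable (fun i => t k (i + (k + 2))) :=
    (summable_nat_add_iff (k + 2)).mpr (summable_t k)
  have hsplit := Summable.sum_add_tsum_nat_add (f := fun i => t k (i + (k + 1))) 1 hs1
  simp only [Finset.sum_range_one] at hsplit
  have heq : (fun i => t k (i + 1 + (k + 1))) = (fun i => t k (i + (k + 2))) := by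
    funext i; congr 1; ring
  set r : ℝ := ((k : ℝ) + 1) / ((k : ℝ) + 3) with hrdef
  have hr0 : (0:ℝ) ≤ r := by positivity
  have hr1 : r < 1 := by
    rw [hrdef, div_lt_one (by positivity)]
    linarith
  have hgs : Summable (fun i : ℕ => t k (k + 2) * r ^ i) :=
    (summable_geometric_of_lt_one hr0 hr1).mul_left _
  have h2 : ∑' i, t k (i + (k + 2)) ≤ ∑' i : ℕ, t k (k + 2) * r ^ i :=
    Summable.tsum_le_tsum (tail_geom k) hs2 hgs
  have h3 : ∑' i : ℕ, t k (k + 2) * r ^ i = t k (k + 2) * (((k : ℝ) + 3) / 2) := by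
    rw [tsum_mul_left, tsum_geometric_of_lt_one hr0 hr1]
    congr 1
    have h4 : ((k:ℝ) + 3) ≠ 0 := by positivity
    have h5 : (1:ℝ) - r = 2 / ((k:ℝ) + 3) := by
      rw [hrdef]
      field_simp
      ring
    rw [h5, inv_div]
  have : ∑' i, t k (i + (k + 1)) = t k (0 + (k + 1)) + ∑' i, t k (i + (k + 2)) := by
    rw [← hsplit]
    congr 1
    rw [heq]
  rw [this]
  simp only [Nat.zero_add]
  linarith

lemma exp_half_le (k : ℕ) :
    (1 / 2) * Real.exp ((k : ℝ) + 1) ≤ t k (k + 1) + t k (k + 2) * (((k : ℝ) + 3) / 2) := by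
  have h1 := exp_split k
  have h2 := H_le_T k
  have h3 := tail_bound k
  linarith

lemma t_k1 (k : ℕ) : t k (k + 1) = ((k : ℝ) + 1) ^ k / (Nat.factorial k : ℝ) := by
  unfold t
  rw [Nat.factorial_succ, pow_succ]
  push_cast
  have h1 : (Nat.factorial k : ℝ) ≠ 0 := by positivity
  have h2 : ((k : ℝ) + 1) ≠ 0 := by positivity
  field_simp

lemma t_k2 (k : ℕ) : t k (k + 2) = ((k : ℝ) + 1) ^ (k + 1) / (((k : ℝ) + 2) * (Nat.factorial k : ℝ)) := by
  unfold t
  rw [show k + 2 = (k + 1) + 1 by ring, Nat.factorial_succ, Nat.factorial_succ, pow_succ]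
  push_cast
  have h1 : (Nat.factorial k : ℝ) ≠ 0 := by positivity
  have h2 : ((k : ℝ) + 1) ≠ 0 := by positivity
  have h3 : ((k : ℝ) + 2) ≠ 0 := by positivity
  field_simp
  ring

lemma exp_sixth_fifth : Real.exp (6 / 5) < 3.5 := by
  have h1 : Real.exp 1 < 2.7182818286 := Real.exp_one_lt_d9
  have h2 : Real.exp (6 / 5) ^ 5 = Real.exp 1 ^ 6 := by
    rw [← Real.exp_nat_mul, ← Real.exp_nat_mul]
    norm_num
  have h3 : Real.exp 1 ^ 6 < 2.7182818286 ^ 6 :=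
    pow_lt_pow_left₀ h1 (Real.exp_pos 1).le (by norm_num)
  have h4 : Real.exp (6 / 5) ^ 5 < (3.5 : ℝ) ^ 5 := by
    rw [h2]
    calc Real.exp 1 ^ 6 < 2.7182818286 ^ 6 := h3
      _ < (3.5 : ℝ) ^ 5 := by norm_num
  exact lt_of_pow_lt_pow_left₀ 5 (by norm_num) h4

lemma pow_succ_bound (k : ℕ) (hk : 5 ≤ k) :
    ((k : ℝ) + 1) ^ (k + 1) * ((k : ℝ) + 3) < 4 * ((k : ℝ) + 2) * (k : ℝ) ^ (k + 1) := by
  have hk5 : (5 : ℝ) ≤ (k : ℝ) := by exact_mod_cast hk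
  have hkpos : (0 : ℝ) < (k : ℝ) := by linarith
  have h1 : ((k : ℝ) + 1) ^ (k + 1) ≤ (k : ℝ) ^ (k + 1) * Real.exp (6 / 5) := by
    have ha : (k : ℝ) + 1 = (k : ℝ) * (1 + 1 / (k : ℝ)) := by field_simp
    have hb : (1 : ℝ) + 1 / (k : ℝ) ≤ Real.exp (1 / (k : ℝ)) := by
      have := Real.add_one_le_exp (1 / (k : ℝ))
      linarith
    have hc : ((1 : ℝ) + 1 / (k : ℝ)) ^ (k + 1) ≤ Real.exp (1 / (k : ℝ)) ^ (k + 1) :=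
      pow_le_pow_left₀ (by positivity) hb _
    have hd : Real.exp (1 / (k : ℝ)) ^ (k + 1) = Real.exp (((k : ℕ) + 1 : ℕ) * (1 / (k : ℝ))) := by
      rw [Real.exp_nat_mul]
    have he : (((k : ℕ) + 1 : ℕ) : ℝ) * (1 / (k : ℝ)) ≤ 6 / 5 := by
      push_cast
      rw [mul_one_div, div_le_div_iff₀ hkpos (by norm_num)]
      linarith
    have hf : Real.exp (1 / (k : ℝ)) ^ (k + 1) ≤ Real.exp (6 / 5) := by
      rw [hd]
      exact Real.exp_le_exp.mpr he
    calc ((k : ℝ) + 1) ^ (k + 1) = (k : ℝ) ^ (k + 1) * ((1 : ℝ) + 1 / (k : ℝ)) ^ (k + 1) := by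
          rw [ha, mul_pow]
      _ ≤ (k : ℝ) ^ (k + 1) * Real.exp (6 / 5) := by
          apply mul_le_mul_of_nonneg_left (hc.trans hf) (by positivity)
  have h2 : Real.exp (6 / 5) < 3.5 := exp_sixth_fifth
  have h3 : (3.5 : ℝ) * ((k : ℝ) + 3) ≤ 4 * ((k : ℝ) + 2) := by linarith
  have hkpow : (0 : ℝ) < (k : ℝ) ^ (k + 1) := by positivity
  calc ((k : ℝ) + 1) ^ (k + 1) * ((k : ℝ) + 3)
      ≤ ((k : ℝ) ^ (k + 1) * Real.exp (6 / 5)) * ((k : ℝ) + 3) := by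
        apply mul_le_mul_of_nonneg_right h1 (by positivity)
    _ < ((k : ℝ) ^ (k + 1) * 3.5) * ((k : ℝ) + 3) := by
        apply mul_lt_mul_of_pos_right _ (by positivity)
        exact mul_lt_mul_of_pos_left h2 hkpow
    _ ≤ 4 * ((k : ℝ) + 2) * (k : ℝ) ^ (k + 1) := by nlinarith
end Stmt15

theorem stmt15 (k : ℕ) (hk : 0 < k) :
    (∑ j ∈ Finset.range k, ((k : ℝ) + 1) ^ j / (Nat.factorial j : ℝ)
        ≤ (1/2) * Real.exp ((k : ℝ) + 1) - ((k : ℝ) + 1) ^ k / (Nat.factorial k : ℝ)) ∧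
      ((1/2) * Real.exp ((k : ℝ) + 1) - ((k : ℝ) + 1) ^ k / (Nat.factorial k : ℝ)
        < 2 * (k : ℝ) ^ (k + 1) / (Nat.factorial k : ℝ)) ∧
      (∑ j ∈ Finset.range k, ((k : ℝ) + 1) ^ j / (Nat.factorial j : ℝ)
        < 2 * (k : ℝ) ^ (k + 1) / (Nat.factorial k : ℝ)) := by
  have hfk : (0:ℝ) < (Nat.factorial k : ℝ) := by positivity
  have hsum1 : ∑ j ∈ Finset.range (k+1), Stmt15.t k j
      = (∑ j ∈ Finset.range k, ((k : ℝ) + 1) ^ j / (Nat.factorial j : ℝ))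
        + ((k : ℝ) + 1) ^ k / (Nat.factorial k : ℝ) := by
    rw [Finset.sum_range_succ]; rfl
  have h1 := Stmt15.part1 k
  rw [hsum1] at h1
  have hpart1 : ∑ j ∈ Finset.range k, ((k : ℝ) + 1) ^ j / (Nat.factorial j : ℝ)
      ≤ (1/2) * Real.exp ((k : ℝ) + 1) - ((k : ℝ) + 1) ^ k / (Nat.factorial k : ℝ) := by
    linarith
  have hpart2 : (1/2) * Real.exp ((k : ℝ) + 1) - ((k : ℝ) + 1) ^ k / (Nat.factorial k : ℝ)
      < 2 * (k : ℝ) ^ (k + 1) / (Nat.factorial k : ℝ) := by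
    rcases le_or_gt 5 k with h5 | h5
    · have hh := Stmt15.exp_half_le k
      rw [Stmt15.t_k1, Stmt15.t_k2] at hh
      have hb := Stmt15.pow_succ_bound k h5
      have hlt : ((k : ℝ) + 1) ^ (k + 1) / (((k : ℝ) + 2) * (Nat.factorial k : ℝ))
            * (((k : ℝ) + 3) / 2)
          < 2 * (k : ℝ) ^ (k + 1) / (Nat.factorial k : ℝ) := by
        rw [div_mul_div_comm, div_lt_div_iff₀ (by positivity) (by positivity)]
        nlinarith [hfk]
      linarith
    · have h1e := Real.exp_one_lt_d9
      have h0e := (Real.exp_pos 1).le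
      interval_cases k
      · have he : Real.exp (2:ℝ) = Real.exp 1 ^ 2 := by
          rw [← Real.exp_nat_mul]; norm_num
        have hp : Real.exp 1 ^ 2 < 2.7182818286 ^ 2 :=
          pow_lt_pow_left₀ h1e h0e (by norm_num)
        have hf : Nat.factorial 1 = 1 := rfl
        rw [hf]
        push_cast
        rw [show ((1:ℝ)+1) = 2 from by norm_num]
        rw [he]
        nlinarith [hp]
      · have he : Real.exp (3:ℝ) = Real.exp 1 ^ 3 := by
          rw [← Real.exp_nat_mul]; norm_num
        have hp : Real.exp 1 ^ 3 < 2.7182818286 ^ 3 :=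
          pow_lt_pow_left₀ h1e h0e (by norm_num)
        have hf : Nat.factorial 2 = 2 := rfl
        rw [hf]
        push_cast
        rw [show ((2:ℝ)+1) = 3 from by norm_num]
        rw [he]
        nlinarith [hp]
      · have he : Real.exp (4:ℝ) = Real.exp 1 ^ 4 := by
          rw [← Real.exp_nat_mul]; norm_num
        have hp : Real.exp 1 ^ 4 < 2.7182818286 ^ 4 :=
          pow_lt_pow_left₀ h1e h0e (by norm_num)
        have hf : Nat.factorial 3 = 6 := rfl
        rw [hf]
        push_cast
        rw [show ((3:ℝ)+1) = 4 from by norm_num]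
        rw [he]
        nlinarith [hp]
      · have he : Real.exp (5:ℝ) = Real.exp 1 ^ 5 := by
          rw [← Real.exp_nat_mul]; norm_num
        have hp : Real.exp 1 ^ 5 < 2.7182818286 ^ 5 :=
          pow_lt_pow_left₀ h1e h0e (by norm_num)
        have hf : Nat.factorial 4 = 24 := rfl
        rw [hf]
        push_cast
        rw [show ((4:ℝ)+1) = 5 from by norm_num]
        rw [he]
        nlinarith [hp]
  exact ⟨hpart1, hpart2, lt_of_le_of_lt hpart1 hpart2⟩
end

section
/- Let γ ∈ (0,1) and define c(γ) = (1-γ)·(Γ(1-γ))^{1/γ}. Then c(γ) ∈ [1, e^{γ*}] for all γ ∈ (0,1), where γ* is the Euler–Mascheroni constant; moreover lim_{γ → 0⁺} c(γ) = e^{γ*} and lim_{γ → 1⁻} c(γ) = 1. -/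
open Real Filter Finset Set Topology

lemma aux_key_clean (m n : ℕ) :
    (n:ℝ)^(m+1) + ((m:ℝ)+1) * (n:ℝ)^m ≤ ((n:ℝ)+1)^(m+1) := by
  induction m with
  | zero => simp
  | succ m ih =>
    have hn : (0:ℝ) ≤ (n:ℝ) := Nat.cast_nonneg n
    have h1 : ((n:ℝ)+1)^(m+1+1) = ((n:ℝ)+1)^(m+1) * ((n:ℝ)+1) := pow_succ _ _
    have h2 : ((n:ℝ)^(m+1) + ((m:ℝ)+1) * (n:ℝ)^m) * ((n:ℝ)+1) ≤ ((n:ℝ)+1)^(m+1) * ((n:ℝ)+1) := by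
      apply mul_le_mul_of_nonneg_right ih (by linarith)
    have h3 : (n:ℝ)^(m+1) = (n:ℝ)^m * n := by rw [pow_succ]
    have h4 : (n:ℝ)^(m+1+1) = (n:ℝ)^(m+1) * n := by rw [pow_succ]
    have h5 : (0:ℝ) ≤ (n:ℝ)^m := by positivity
    push_cast
    nlinarith [h5, hn]

lemma aux_bern (m n : ℕ) (hn : 1 ≤ n) :
    ((m:ℝ) + 1) / ((n:ℝ)+1)^(m+2) ≤ 1/(n:ℝ)^(m+1) - 1/((n:ℝ)+1)^(m+1) := by
  have ha : (0:ℝ) < n := by exact_mod_cast hn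
  have hb : (0:ℝ) < (n:ℝ)+1 := by linarith
  rw [div_sub_div _ _ (by positivity) (by positivity),
    div_le_div_iff₀ (by positivity) (by positivity)]
  have key := aux_key_clean m n
  have e : ((n:ℝ)+1)^(m+2) = ((n:ℝ)+1)^(m+1) * ((n:ℝ)+1) := pow_succ _ _
  have h5 : ((m:ℝ)+1) * (n:ℝ)^m ≤ ((n:ℝ)+1)^(m+1) - (n:ℝ)^(m+1) := by linarith
  have h6 : (n:ℝ)^(m+1) = (n:ℝ)^m * n := pow_succ _ _
  calc ((m:ℝ)+1) * ((n:ℝ)^(m+1) * ((n:ℝ)+1)^(m+1))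
      = (((m:ℝ)+1) * (n:ℝ)^m) * ((n:ℝ) * ((n:ℝ)+1)^(m+1)) := by rw [h6]; ring
    _ ≤ (((n:ℝ)+1)^(m+1) - (n:ℝ)^(m+1)) * (((n:ℝ)+1) * ((n:ℝ)+1)^(m+1)) := by
        apply mul_le_mul h5 ?_ (by positivity) ?_
        · apply mul_le_mul_of_nonneg_right (by linarith) (by positivity)
        · nlinarith [pow_pos ha (m+1), pow_pos hb (m+1), h5, pow_pos ha m]
    _ = (1 * ((n:ℝ)+1)^(m+1) - (n:ℝ)^(m+1) * 1) * ((n:ℝ)+1)^(m+2) := by rw [e]; ring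

lemma aux_zeta_strong (m : ℕ) : ∀ n : ℕ, 1 ≤ n →
    ∑ i ∈ Finset.range n, 1/((i:ℝ)+1)^(m+2) + (1/((m:ℝ)+1)) * (1/(n:ℝ)^(m+1))
      ≤ ((m:ℝ)+2)/((m:ℝ)+1) := by
  intro n hn
  induction n with
  | zero => omega
  | succ k ih =>
    rcases Nat.eq_or_lt_of_le hn with h1 | h1
    · simp only [← h1]
      have hm1 : (0:ℝ) < (m:ℝ)+1 := by positivity
      have e : ((m:ℝ)+2)/((m:ℝ)+1) = 1 + ((m:ℝ)+1)⁻¹ := by field_simp; ring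
      norm_num [e]
    · have hk : 1 ≤ k := by omega
      have ihk := ih hk
      rw [Finset.sum_range_succ]
      have hb := aux_bern m k hk
      have hm : (0:ℝ) < 1/((m:ℝ)+1) := by positivity
      have hb2 := mul_le_mul_of_nonneg_left hb hm.le
      have e1 : (1/((m:ℝ)+1)) * (((m:ℝ)+1) / ((k:ℝ)+1)^(m+2)) = 1/((k:ℝ)+1)^(m+2) := by
        field_simp
      rw [e1, mul_sub] at hb2
      push_cast
      linarith

lemma aux_zeta (m n : ℕ) :
    ∑ i ∈ Finset.range n, 1/((i:ℝ)+1)^(m+2) ≤ ((m:ℝ)+2)/((m:ℝ)+1) := by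
  rcases Nat.eq_zero_or_pos n with h | h
  · subst h; simp; positivity
  · have := aux_zeta_strong m n h
    have h2 : 0 ≤ (1/((m:ℝ)+1)) * (1/(n:ℝ)^(m+1)) := by positivity
    linarith

lemma aux_hasSum_f0 {t : ℝ} (h0 : 0 ≤ t) (h1 : t < 1) :
    HasSum (fun m : ℕ => t^(m+2)/((m:ℝ)+2)) (-Real.log (1-t) - t) := by
  have habs : |t| < 1 := by rw [abs_of_nonneg h0]; exact h1
  have h := Real.hasSum_pow_div_log_of_abs_lt_one habs
  have h2 : HasSum (fun n : ℕ => t ^ (n + 1 + 1) / ((↑(n + 1) : ℝ) + 1)) (-Real.log (1-t) - t) := by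
    apply (hasSum_nat_add_iff (f := fun n : ℕ => t ^ (n + 1) / ((n : ℝ) + 1)) 1).mpr
    rw [show -Real.log (1-t) - t + ∑ i ∈ Finset.range 1, t ^ (i + 1) / ((i:ℝ) + 1) = -Real.log (1-t) by simp]
    exact h
  convert h2 using 2 with m
  push_cast
  ring_nf

lemma aux_sum_f0_le {g : ℝ} (h0 : 0 < g) (h1 : g < 1) (n : ℕ) :
    ∑ i ∈ Finset.range n, (-Real.log (1 - g/((i:ℝ)+1)) - g/((i:ℝ)+1))
      ≤ g * (-Real.log (1-g)) := by
  have hti : ∀ i : ℕ, 0 ≤ g/((i:ℝ)+1) ∧ g/((i:ℝ)+1) < 1 := by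
    intro i
    constructor
    · positivity
    · have hi1 : (1:ℝ) ≤ (i:ℝ)+1 := by
        have : (0:ℝ) ≤ (i:ℝ) := Nat.cast_nonneg i
        linarith
      calc g/((i:ℝ)+1) ≤ g/1 := by
            apply div_le_div_of_nonneg_left h0.le zero_lt_one hi1
        _ = g := div_one g
        _ < 1 := h1
  have hL : HasSum (fun m : ℕ => ∑ i ∈ Finset.range n, (g/((i:ℝ)+1))^(m+2)/((m:ℝ)+2))
      (∑ i ∈ Finset.range n, (-Real.log (1 - g/((i:ℝ)+1)) - g/((i:ℝ)+1))) := by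
    apply hasSum_sum
    intro i _
    exact aux_hasSum_f0 (hti i).1 (hti i).2
  have hR : HasSum (fun m : ℕ => g * (g^(m+1)/((m:ℝ)+1))) (g * (-Real.log (1-g))) := by
    apply HasSum.mul_left
    exact Real.hasSum_pow_div_log_of_abs_lt_one (by rw [abs_of_nonneg h0.le]; exact h1)
  apply hasSum_le _ hL hR
  intro m
  have e1 : ∀ i : ℕ, (g/((i:ℝ)+1))^(m+2)/((m:ℝ)+2)
      = (g^(m+2)/((m:ℝ)+2)) * (1/((i:ℝ)+1)^(m+2)) := by
    intro i
    rw [div_pow]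
    ring
  simp only [e1, ← Finset.mul_sum]
  have hz := aux_zeta m n
  have hc : (0:ℝ) ≤ g^(m+2)/((m:ℝ)+2) := by positivity
  calc g^(m+2)/((m:ℝ)+2) * ∑ i ∈ Finset.range n, 1/((i:ℝ)+1)^(m+2)
      ≤ g^(m+2)/((m:ℝ)+2) * (((m:ℝ)+2)/((m:ℝ)+1)) := by
        apply mul_le_mul_of_nonneg_left hz hc
    _ = g * (g^(m+1)/((m:ℝ)+1)) := by
        have hm2 : ((m:ℝ)+2) ≠ 0 := by positivity
        have hm1 : ((m:ℝ)+1) ≠ 0 := by positivity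
        field_simp
        ring

lemma aux_tendsto_sum_f0 {g : ℝ} (h0 : 0 < g) (h1 : g < 1) :
    Filter.Tendsto (fun n : ℕ => ∑ i ∈ Finset.range n,
        (-Real.log (1 - g/((i:ℝ)+1)) - g/((i:ℝ)+1)))
      atTop (𝓝 (Real.log (Real.Gamma (1-g)) - g * Real.eulerMascheroniConstant)) := by
  have hg1 : (0:ℝ) < 1 - g := by linarith
  have hlg := Real.BohrMollerup.tendsto_log_gamma (x := 1-g) hg1
  have hH := Real.tendsto_harmonic_sub_log
  -- log n - log (n+1-g) → 0
  have hq : Filter.Tendsto (fun n : ℕ => ((n:ℝ)+1-g)/(n:ℝ)) atTop (𝓝 1) := by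
    have hbase : Filter.Tendsto (fun n : ℕ => 1 + (1-g)/(n:ℝ)) atTop (𝓝 (1 + 0)) := by
      apply tendsto_const_nhds.add
      apply Tendsto.div_atTop tendsto_const_nhds
      exact tendsto_natCast_atTop_atTop
    rw [add_zero] at hbase
    apply hbase.congr'
    filter_upwards [eventually_gt_atTop 0] with n hn
    have hn' : (n:ℝ) ≠ 0 := by positivity
    field_simp
    ring
  have hlog1 : Filter.Tendsto (fun n : ℕ => Real.log (((n:ℝ)+1-g)/(n:ℝ))) atTop (𝓝 0) := by
    have := (Real.continuousAt_log one_ne_zero).tendsto.comp hq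
    rwa [Real.log_one] at this
  have h3 : Filter.Tendsto (fun n : ℕ => Real.log (n:ℝ) - Real.log ((n:ℝ)+1-g)) atTop (𝓝 0) := by
    have := hlog1.neg
    rw [neg_zero] at this
    apply this.congr'
    filter_upwards [eventually_gt_atTop 0] with n hn
    have hn' : (0:ℝ) < (n:ℝ) := by exact_mod_cast hn
    rw [Real.log_div (by linarith) hn'.ne']
    ring
  have hcomb := (hlg.sub (hH.const_mul g)).sub h3
  rw [sub_zero] at hcomb
  apply hcomb.congr
  intro n
  -- the algebraic identity
  have hfact : Real.log ((Nat.factorial n : ℕ) : ℝ) = ∑ i ∈ Finset.range n, Real.log ((i:ℝ)+1) := by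
    have e : ((Nat.factorial n : ℕ) : ℝ) = ∏ i ∈ Finset.range n, ((i:ℝ)+1) := by
      rw [← Finset.prod_range_add_one_eq_factorial]
      push_cast
      rfl
    rw [e, Real.log_prod]
    intro i _
    positivity
  have hsum1 : ∑ m ∈ Finset.range (n+1), Real.log ((1-g) + (m:ℝ))
      = ∑ i ∈ Finset.range n, Real.log ((i:ℝ)+1-g) + Real.log ((n:ℝ)+1-g) := by
    rw [Finset.sum_range_succ]
    congr 1
    · apply Finset.sum_congr rfl
      intro i _
      congr 1
      ring
    · congr 1
      ring
  have hharm : (harmonic n : ℝ) = ∑ i ∈ Finset.range n, 1/((i:ℝ)+1) := by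
    rw [harmonic]
    push_cast
    simp [one_div]
  have hterm : ∀ i ∈ Finset.range n,
      -Real.log (1 - g/((i:ℝ)+1)) - g/((i:ℝ)+1)
      = (Real.log ((i:ℝ)+1) - Real.log ((i:ℝ)+1-g)) - g * (1/((i:ℝ)+1)) := by
    intro i _
    have hi : (0:ℝ) < (i:ℝ)+1 := by positivity
    have hig : (0:ℝ) < (i:ℝ)+1-g := by
      have : (0:ℝ) ≤ (i:ℝ) := Nat.cast_nonneg i
      linarith
    have e : 1 - g/((i:ℝ)+1) = ((i:ℝ)+1-g)/((i:ℝ)+1) := by field_simp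
    rw [e, Real.log_div hig.ne' hi.ne']
    ring
  rw [Real.BohrMollerup.logGammaSeq, hfact, hsum1, hharm,
    Finset.sum_congr rfl hterm, Finset.sum_sub_distrib, Finset.sum_sub_distrib,
    ← Finset.mul_sum]
  ring

lemma aux_tangent {f : ℝ → ℝ} (hc : ConvexOn ℝ (Set.Ioi 0) f)
    {p d : ℝ} (hp : p ∈ Set.Ioi (0:ℝ)) (hd : HasDerivAt f d p)
    {x : ℝ} (hx : x ∈ Set.Ioi (0:ℝ)) : f p + d * (x - p) ≤ f x := by
  rcases lt_trichotomy x p with h | h | h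
  · have hs := hc.slope_le_deriv hx hp h hd.differentiableAt
    rw [hd.deriv] at hs
    rw [slope_def_field] at hs
    have hpx : 0 < p - x := by linarith
    rw [div_le_iff₀ hpx] at hs
    nlinarith
  · subst h; simp
  · have hs := hc.deriv_le_slope hp hx h hd.differentiableAt
    rw [hd.deriv] at hs
    rw [slope_def_field] at hs
    have hpx : 0 < x - p := by linarith
    rw [le_div_iff₀ hpx] at hs
    nlinarith

lemma aux_logGamma_deriv_one :
    HasDerivAt (fun x => Real.log (Real.Gamma x)) (-Real.eulerMascheroniConstant) 1 := by
  have h := Real.hasDerivAt_Gamma_one.log (by rw [Real.Gamma_one]; norm_num)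
  simpa [Real.Gamma_one] using h

lemma aux_logGamma_deriv_two :
    HasDerivAt (fun x => Real.log (Real.Gamma x)) (1 - Real.eulerMascheroniConstant) 2 := by
  have h0 := Real.hasDerivAt_Gamma_nat 1
  have h1 : ((1:ℕ):ℝ) + 1 = 2 := by norm_num
  rw [h1] at h0
  have h := h0.log (by rw [show (2:ℝ) = (1:ℕ)+1 by norm_num, Real.Gamma_nat_eq_factorial]; norm_num)
  have e2 : Real.Gamma 2 = 1 := by
    rw [show (2:ℝ) = (1:ℕ)+1 by norm_num, Real.Gamma_nat_eq_factorial]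
    norm_num
  simp only [e2] at h
  convert h using 1
  norm_num [harmonic_succ]
  ring

lemma aux_convex : ConvexOn ℝ (Set.Ioi (0:ℝ)) (fun x => Real.log (Real.Gamma x)) := by
  have := Real.convexOn_log_Gamma
  simpa [Function.comp_def] using this

lemma aux_tangent_one {x : ℝ} (hx : 0 < x) :
    -Real.eulerMascheroniConstant * (x - 1) ≤ Real.log (Real.Gamma x) := by
  have h := aux_tangent aux_convex (Set.mem_Ioi.mpr one_pos) aux_logGamma_deriv_one
    (Set.mem_Ioi.mpr hx)
  simpa [Real.Gamma_one] using h

lemma aux_tangent_two {x : ℝ} (hx : 0 < x) :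
    (1 - Real.eulerMascheroniConstant) * (x - 2) ≤ Real.log (Real.Gamma x) := by
  have h := aux_tangent aux_convex (Set.mem_Ioi.mpr two_pos) aux_logGamma_deriv_two
    (Set.mem_Ioi.mpr hx)
  have e2 : Real.Gamma 2 = 1 := by
    rw [show (2:ℝ) = (1:ℕ)+1 by norm_num, Real.Gamma_nat_eq_factorial]
    norm_num
  rw [e2, Real.log_one] at h
  linarith

lemma aux_psi_nonneg {x : ℝ} (hx : Real.exp (-Real.eulerMascheroniConstant) ≤ x) (hx1 : x ≤ 1) :
    x * Real.log x ≤ (1 - Real.eulerMascheroniConstant) * (x - 1) := by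
  set em := Real.eulerMascheroniConstant with hem
  set a := Real.exp (-em) with ha
  have ha0 : 0 < a := Real.exp_pos _
  set ψ : ℝ → ℝ := fun y => (1 - em) * (y - 1) - y * Real.log y with hψ
  have hder : ∀ y : ℝ, 0 < y → HasDerivAt ψ (-em - Real.log y) y := by
    intro y hy
    have h1 : HasDerivAt (fun z : ℝ => (1 - em) * (z - 1)) (1 - em) y := by
      simpa using ((hasDerivAt_id y).sub_const 1).const_mul (1 - em)
    have h2 : HasDerivAt (fun z : ℝ => z * Real.log z) (Real.log y + 1) y :=
      Real.hasDerivAt_mul_log hy.ne'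
    have := h1.sub h2
    exact this.congr_deriv (by ring)
  have hanti : StrictAntiOn ψ (Set.Icc a 1) := by
    apply strictAntiOn_of_deriv_neg (convex_Icc a 1)
    · apply ContinuousOn.sub
      · fun_prop
      · apply ContinuousOn.mul continuousOn_id
        apply Real.continuousOn_log.mono
        intro y hy
        simp only [Set.mem_compl_iff, Set.mem_singleton_iff]
        exact ne_of_gt (lt_of_lt_of_le ha0 hy.1)
    · intro y hy
      rw [interior_Icc] at hy
      have hy0 : 0 < y := lt_trans ha0 hy.1
      rw [(hder y hy0).deriv]
      have : -em < Real.log y := by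
        have := Real.log_lt_log ha0 hy.1
        rwa [ha, Real.log_exp] at this
      linarith
  have hx0 : 0 < x := lt_of_lt_of_le ha0 hx
  have hψ1 : ψ 1 = 0 := by simp [hψ]
  rcases eq_or_lt_of_le hx1 with h | h
  · subst h; simp
  · have hem0 : (0:ℝ) < em := lt_trans one_half_pos Real.one_half_lt_eulerMascheroniConstant
    have ha1 : a ≤ 1 := by
      rw [ha, show (1:ℝ) = Real.exp 0 by simp]
      exact Real.exp_le_exp.mpr (by linarith)
    have hlt := hanti (Set.mem_Icc.mpr ⟨hx, hx1⟩) (Set.mem_Icc.mpr ⟨ha1, le_refl 1⟩) h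
    rw [hψ1] at hlt
    simp only [hψ] at hlt
    linarith

lemma aux_xlogx_le_logGamma {x : ℝ} (hx0 : 0 < x) (hx1 : x < 1) :
    x * Real.log x ≤ Real.log (Real.Gamma (x + 1)) := by
  set em := Real.eulerMascheroniConstant with hem
  have hx1p : 0 < x + 1 := by linarith
  rcases le_or_gt (Real.log x) (-em) with h | h
  · have t1 := aux_tangent_one hx1p
    have : x * Real.log x ≤ x * (-em) := by
      apply mul_le_mul_of_nonneg_left h hx0.le
    calc x * Real.log x ≤ x * (-em) := this
      _ = -em * (x + 1 - 1) := by ring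
      _ ≤ Real.log (Real.Gamma (x+1)) := t1
  · have t2 := aux_tangent_two hx1p
    have hax : Real.exp (-em) ≤ x := by
      have h2 := (Real.exp_lt_exp.mpr h).le
      rwa [Real.exp_log hx0] at h2
    calc x * Real.log x ≤ (1 - em) * (x - 1) := aux_psi_nonneg hax hx1.le
      _ = (1 - em) * (x + 1 - 2) := by ring
      _ ≤ Real.log (Real.Gamma (x+1)) := t2

lemma aux_bounds {g : ℝ} (h0 : 0 < g) (h1 : g < 1) :
    g * Real.eulerMascheroniConstant ≤ Real.log (Real.Gamma (1-g)) ∧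
    Real.log (Real.Gamma (1-g)) ≤ g * Real.eulerMascheroniConstant - g * Real.log (1-g) ∧
    -(g * Real.log (1-g)) ≤ Real.log (Real.Gamma (1-g)) := by
  have hg1 : (0:ℝ) < 1 - g := by linarith
  have htd := aux_tendsto_sum_f0 h0 h1
  refine ⟨?_, ?_, ?_⟩
  · have h : (0:ℝ) ≤ Real.log (Real.Gamma (1-g)) - g * Real.eulerMascheroniConstant :=
      ge_of_tendsto htd ?_
    · linarith
    · filter_upwards with n
      apply Finset.sum_nonneg
      intro i _
      have hi : (0:ℝ) < (i:ℝ)+1 := by positivity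
      have ht0 : 0 ≤ g/((i:ℝ)+1) := by positivity
      have ht1 : g/((i:ℝ)+1) < 1 := by
        have hle : g/((i:ℝ)+1) ≤ g/1 :=
          div_le_div_of_nonneg_left h0.le zero_lt_one (by linarith [Nat.cast_nonneg (α := ℝ) i])
        rw [div_one] at hle
        exact hle.trans_lt h1
      have hl := Real.log_le_sub_one_of_pos (by linarith : (0:ℝ) < 1 - g/((i:ℝ)+1))
      linarith
  · have h : Real.log (Real.Gamma (1-g)) - g * Real.eulerMascheroniConstant
        ≤ g * (-Real.log (1-g)) := le_of_tendsto htd ?_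
    · linarith
    · filter_upwards with n
      exact aux_sum_f0_le h0 h1 n
  · have hx := aux_xlogx_le_logGamma hg1 (by linarith : 1 - g < 1)
    have hΓ : (0:ℝ) < Real.Gamma (1-g) := Real.Gamma_pos_of_pos hg1
    have hrec : Real.Gamma ((1-g)+1) = (1-g) * Real.Gamma (1-g) :=
      Real.Gamma_add_one hg1.ne'
    rw [hrec, Real.log_mul hg1.ne' hΓ.ne'] at hx
    linarith

lemma aux_exp_form {g : ℝ} (h0 : 0 < g) (h1 : g < 1) :
    (1 - g) * Real.Gamma (1 - g) ^ (1/g)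
      = Real.exp (Real.log (1-g) + (1/g) * Real.log (Real.Gamma (1-g))) := by
  have hg1 : (0:ℝ) < 1 - g := by linarith
  have hΓ : 0 < Real.Gamma (1-g) := Real.Gamma_pos_of_pos hg1
  rw [Real.exp_add, Real.exp_log hg1]
  congr 1
  rw [Real.rpow_def_of_pos hΓ]
  congr 1
  ring

theorem stmt18 :
    (∀ γ : ℝ, γ ∈ Set.Ioo (0 : ℝ) 1 →
      (1 - γ) * Real.Gamma (1 - γ) ^ (1/γ)
        ∈ Set.Icc (1 : ℝ) (Real.exp Real.eulerMascheroniConstant)) ∧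
    Filter.Tendsto (fun γ : ℝ => (1 - γ) * Real.Gamma (1 - γ) ^ (1/γ))
      (nhdsWithin 0 (Set.Ioi 0)) (nhds (Real.exp Real.eulerMascheroniConstant)) ∧
    Filter.Tendsto (fun γ : ℝ => (1 - γ) * Real.Gamma (1 - γ) ^ (1/γ))
      (nhdsWithin 1 (Set.Iio 1)) (nhds 1) := by
  set em := Real.eulerMascheroniConstant with hem
  -- bounds on the exponent
  have hargbd : ∀ g : ℝ, 0 < g → g < 1 →
      em + Real.log (1-g) ≤ Real.log (1-g) + (1/g) * Real.log (Real.Gamma (1-g)) ∧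
      Real.log (1-g) + (1/g) * Real.log (Real.Gamma (1-g)) ≤ em := by
    intro g h0 h1
    obtain ⟨hI, hII, hIII⟩ := aux_bounds h0 h1
    have hγ0 : (0:ℝ) ≤ 1/g := by positivity
    have e1 : (1/g) * (g * em) = em := by field_simp
    have e2 : (1/g) * (g * em - g * Real.log (1-g)) = em - Real.log (1-g) := by
      field_simp
    constructor
    · have h5 := mul_le_mul_of_nonneg_left hI hγ0
      rw [e1] at h5
      linarith
    · have h5 := mul_le_mul_of_nonneg_left hII hγ0
      rw [e2] at h5
      linarith
  refine ⟨?_, ?_, ?_⟩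
  · -- part 1 : bounds
    rintro γ ⟨h0, h1⟩
    obtain ⟨hlo, hhi⟩ := hargbd γ h0 h1
    obtain ⟨hI, hII, hIII⟩ := aux_bounds h0 h1
    rw [aux_exp_form h0 h1]
    constructor
    · apply Real.one_le_exp
      have hγ0 : (0:ℝ) ≤ 1/γ := by positivity
      have h5 := mul_le_mul_of_nonneg_left hIII hγ0
      have e3 : (1/γ) * -(γ * Real.log (1-γ)) = -Real.log (1-γ) := by
        field_simp
      rw [e3] at h5
      linarith
    · exact Real.exp_le_exp.mpr hhi
  · -- limit at 0⁺
    have hmem : Set.Ioo (0:ℝ) 1 ∈ 𝓝[>] (0:ℝ) :=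
      Ioo_mem_nhdsGT zero_lt_one
    have hlog0 : Filter.Tendsto (fun g : ℝ => Real.log (1-g)) (𝓝[>] (0:ℝ)) (𝓝 0) := by
      have hc : ContinuousAt (fun g : ℝ => Real.log (1-g)) 0 := by
        apply Real.continuousAt_log ?_ |>.comp (by fun_prop)
        norm_num
      have h2 : Filter.Tendsto (fun g : ℝ => Real.log (1-g)) (𝓝[>] (0:ℝ))
          (𝓝 (Real.log (1-0))) := hc.tendsto.mono_left nhdsWithin_le_nhds
      simpa using h2
    have hA : Filter.Tendsto
        (fun g : ℝ => Real.log (1-g) + (1/g) * Real.log (Real.Gamma (1-g)))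
        (𝓝[>] (0:ℝ)) (𝓝 em) := by
      apply tendsto_of_tendsto_of_tendsto_of_le_of_le'
        (g := fun g : ℝ => em + Real.log (1-g)) (h := fun _ : ℝ => em)
      · have := (tendsto_const_nhds (x := em) (f := 𝓝[>] (0:ℝ))).add hlog0
        simpa using this
      · exact tendsto_const_nhds
      · filter_upwards [hmem] with g hg
        exact (hargbd g hg.1 hg.2).1
      · filter_upwards [hmem] with g hg
        exact (hargbd g hg.1 hg.2).2
    have := (Real.continuous_exp.tendsto em).comp hA
    apply this.congr'
    filter_upwards [hmem] with g hg
    exact (aux_exp_form hg.1 hg.2).symm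
  · -- limit at 1⁻
    have hmem : Set.Ioo (0:ℝ) 1 ∈ 𝓝[<] (1:ℝ) :=
      Ioo_mem_nhdsLT zero_lt_one
    have h_inv : Filter.Tendsto (fun g : ℝ => 1/g) (𝓝[<] (1:ℝ)) (𝓝 1) := by
      have hc : ContinuousAt (fun g : ℝ => 1/g) 1 :=
        continuousAt_const.div continuousAt_id one_ne_zero
      have h2 : Filter.Tendsto (fun g : ℝ => 1/g) (𝓝[<] (1:ℝ)) (𝓝 (1/1)) :=
        hc.tendsto.mono_left nhdsWithin_le_nhds
      simpa using h2
    have h_lg : Filter.Tendsto (fun g : ℝ => Real.log (Real.Gamma (2-g))) (𝓝[<] (1:ℝ)) (𝓝 0) := by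
      have hΓc : ContinuousAt Real.Gamma 1 := by
        apply (Real.differentiableAt_Gamma ?_).continuousAt
        intro m hcon
        have h1 : (0:ℝ) ≤ (m:ℝ) := Nat.cast_nonneg m
        have h2 : (1:ℝ) = -(m:ℝ) := hcon
        linarith
      have t1 : Filter.Tendsto (fun g : ℝ => 2 - g) (𝓝 (1:ℝ)) (𝓝 (1:ℝ)) := by
        have hc : ContinuousAt (fun g : ℝ => 2 - g) 1 := by fun_prop
        have := hc.tendsto
        norm_num at this
        exact this
      have t2 : Filter.Tendsto Real.Gamma (𝓝 (1:ℝ)) (𝓝 (1:ℝ)) := by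
        simpa [Real.Gamma_one] using hΓc.tendsto
      have t3 : Filter.Tendsto Real.log (𝓝 (1:ℝ)) (𝓝 (0:ℝ)) := by
        simpa [Real.log_one] using (Real.continuousAt_log one_ne_zero).tendsto
      exact ((t3.comp t2).comp t1).mono_left nhdsWithin_le_nhds
    have h_xlx : Filter.Tendsto (fun g : ℝ => Real.log (1-g) * (1-g)) (𝓝[<] (1:ℝ)) (𝓝 0) := by
      have h := tendsto_log_mul_rpow_nhdsGT_zero zero_lt_one
      simp only [Real.rpow_one] at h
      apply h.comp
      apply tendsto_nhdsWithin_of_tendsto_nhds_of_eventually_within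
      · have hc : ContinuousAt (fun g : ℝ => 1-g) 1 := by fun_prop
        have h2 : Filter.Tendsto (fun g : ℝ => 1-g) (𝓝[<] (1:ℝ)) (𝓝 (1-1)) :=
          hc.tendsto.mono_left nhdsWithin_le_nhds
        simpa using h2
      · filter_upwards [self_mem_nhdsWithin] with g hg
        simp only [Set.mem_Iio] at hg
        simp only [Set.mem_Ioi]
        linarith
    have hB : Filter.Tendsto
        (fun g : ℝ => (1/g) * Real.log (Real.Gamma (2-g)) - (1/g) * (Real.log (1-g) * (1-g)))
        (𝓝[<] (1:ℝ)) (𝓝 0) := by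
      have := (h_inv.mul h_lg).sub (h_inv.mul h_xlx)
      simpa using this
    have hexp := (Real.continuous_exp.tendsto 0).comp hB
    rw [Real.exp_zero] at hexp
    apply hexp.congr'
    filter_upwards [hmem] with g hg
    have h0 := hg.1
    have h1 := hg.2
    have hg1 : (0:ℝ) < 1 - g := by linarith
    have hΓ : 0 < Real.Gamma (1-g) := Real.Gamma_pos_of_pos hg1
    have hrec : Real.Gamma (2-g) = (1-g) * Real.Gamma (1-g) := by
      rw [show (2:ℝ)-g = (1-g)+1 by ring]
      exact Real.Gamma_add_one hg1.ne'
    have harg : (1/g) * Real.log (Real.Gamma (2-g)) - (1/g) * (Real.log (1-g) * (1-g))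
        = Real.log (1-g) + (1/g) * Real.log (Real.Gamma (1-g)) := by
      rw [hrec, Real.log_mul hg1.ne' hΓ.ne']
      field_simp
      ring
    rw [Function.comp_apply, harg, aux_exp_form h0 h1]
end

section
/- Let γ < 0 and define c(γ) = (1-γ)·(Γ(1-γ))^{1/γ}. Then e^{γ*} ≤ c(γ) ≤ e for all γ < 0, where γ* is the Euler–Mascheroni constant; moreover lim_{γ → 0⁻} c(γ) = e^{γ*} and lim_{γ → -∞} c(γ) = e. -/
open Real Filter Set Topology MeasureTheory Finset



lemma aux_log_ge {u : ℝ} (hu : 0 ≤ u) : u / (1 + u) ≤ Real.log (1 + u) := by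
  have h1 : (0:ℝ) < 1 + u := by linarith
  have h2 := Real.log_le_sub_one_of_pos (show (0:ℝ) < (1+u)⁻¹ by positivity)
  rw [Real.log_inv] at h2
  have h3 : (1+u)⁻¹ - 1 = -(u/(1+u)) := by field_simp; ring
  rw [h3] at h2
  linarith

lemma g_mono {s t : ℝ} (hs : 0 ≤ s) (hst : s ≤ t) :
    s - Real.log (1 + s) ≤ t - Real.log (1 + t) := by
  have h1 : (0:ℝ) < 1 + s := by linarith
  have h2 : (0:ℝ) < 1 + t := by linarith
  have key : Real.log (1 + t) - Real.log (1 + s) ≤ t - s := by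
    rw [← Real.log_div h2.ne' h1.ne']
    have h5 := Real.log_le_sub_one_of_pos (show (0:ℝ) < (1+t)/(1+s) by positivity)
    have h3 : (1+t)/(1+s) - 1 = (t-s)/(1+s) := by field_simp; ring
    have h4 : (t-s)/(1+s) ≤ t - s := by
      rw [div_le_iff₀ h1]
      nlinarith
    linarith
  linarith

section Lseries
variable {a : ℝ} (ha : 0 < a)

private noncomputable def Gf (a : ℝ) : ℝ → ℝ := fun t => -((t+a) * (Real.log (t+a) - Real.log t))

include ha in
lemma Gf_deriv {t : ℝ} (ht : 0 < t) :
    HasDerivAt (Gf a) (a/t - (Real.log (t+a) - Real.log t)) t := by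
  have hta : (0:ℝ) < t + a := by linarith
  have h1 : HasDerivAt (fun s : ℝ => s + a) 1 t := (hasDerivAt_id t).add_const a
  have h2 : HasDerivAt (fun s : ℝ => Real.log (s + a)) ((t+a)⁻¹ * 1) t :=
    by have := (Real.hasDerivAt_log hta.ne').comp t h1; exact this
  have h3 : HasDerivAt (fun s : ℝ => Real.log (s + a) - Real.log s)
      ((t+a)⁻¹ * 1 - t⁻¹) t := h2.sub (Real.hasDerivAt_log ht.ne')
  have h4 := (h1.mul h3).neg
  have h5 : HasDerivAt (Gf a)
      (-(1 * (Real.log (t+a) - Real.log t) + (t+a) * ((t+a)⁻¹ * 1 - t⁻¹))) t := h4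
  convert h5 using 1
  field_simp
  ring

include ha in
lemma Gf_step {j : ℕ} (hj : 1 ≤ j) :
    a/(j+1) - (Real.log ((j:ℝ)+1+a) - Real.log ((j:ℝ)+1)) ≤ Gf a (j+1) - Gf a j := by
  have hj0 : (0:ℝ) < j := by exact_mod_cast hj
  have hcont : ContinuousOn (Gf a) (Icc (j:ℝ) (j+1)) := by
    intro s hs
    have hs0 : (0:ℝ) < s := lt_of_lt_of_le hj0 hs.1
    exact ((Gf_deriv ha hs0).continuousAt).continuousWithinAt
  obtain ⟨c, hc, hceq⟩ := exists_hasDerivAt_eq_slope (Gf a)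
    (fun t => a/t - (Real.log (t+a) - Real.log t))
    (by linarith : (j:ℝ) < j+1) hcont
    (fun s hs => Gf_deriv ha (lt_trans hj0 hs.1))
  have hc0 : (0:ℝ) < c := lt_trans hj0 hc.1
  have hkey : a/(j+1) - Real.log (1 + a/(j+1)) ≤ a/c - Real.log (1 + a/c) := by
    have h1 : a/(j+1) ≤ a/c := by
      apply div_le_div_of_nonneg_left ha.le hc0
      linarith [hc.2]
    have h2 : (0:ℝ) ≤ a/(j+1) := by positivity
    exact g_mono h2 h1
  have e1 : Real.log (1 + a/c) = Real.log (c+a) - Real.log c := by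
    rw [← Real.log_div (by linarith) hc0.ne']
    congr 1
    field_simp
  have e2 : Real.log (1 + a/((j:ℝ)+1)) = Real.log ((j:ℝ)+1+a) - Real.log ((j:ℝ)+1) := by
    rw [← Real.log_div (by positivity) (by positivity : ((j:ℝ)+1) ≠ 0)]
    congr 1
    field_simp
  rw [e1, e2] at hkey
  have hslope : Gf a (j+1) - Gf a j = a/c - (Real.log (c+a) - Real.log c) := by
    rw [hceq]; field_simp; ring
  rw [hslope]
  exact hkey

include ha in
lemma sum_g_le (n : ℕ) :
    ∑ k ∈ range n, (a/((k:ℝ)+2) - (Real.log ((k:ℝ)+2+a) - Real.log ((k:ℝ)+2)))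
      ≤ (1+a) * Real.log (1+a) - a := by
  have step : ∀ k ∈ range n,
      a/((k:ℝ)+2) - (Real.log ((k:ℝ)+2+a) - Real.log ((k:ℝ)+2))
        ≤ Gf a ((k:ℝ)+2) - Gf a ((k:ℝ)+1) := by
    intro k _
    have := Gf_step ha (j := k+1) (Nat.le_add_left 1 k)
    push_cast at this ⊢
    convert this using 3 <;> ring
  calc ∑ k ∈ range n, (a/((k:ℝ)+2) - (Real.log ((k:ℝ)+2+a) - Real.log ((k:ℝ)+2)))
      ≤ ∑ k ∈ range n, (Gf a ((k:ℝ)+2) - Gf a ((k:ℝ)+1)) := Finset.sum_le_sum step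
    _ = Gf a ((n:ℝ)+1) - Gf a 1 := by
        have h := Finset.sum_range_sub (fun k : ℕ => Gf a ((k:ℝ)+1)) n
        rw [show Gf a ((n:ℝ)+1) - Gf a 1 = Gf a ((n:ℝ)+1) - Gf a ((0:ℕ)+1) by norm_num, ← h]
        apply Finset.sum_congr rfl
        intro k _
        congr 2
        push_cast
        ring
    _ ≤ -a - Gf a 1 := by
        have hn1 : (0:ℝ) < (n:ℝ)+1 := by positivity
        have hlog : Real.log ((n:ℝ)+1+a) - Real.log ((n:ℝ)+1) = Real.log (1 + a/((n:ℝ)+1)) := by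
          rw [← Real.log_div (by positivity) hn1.ne']
          congr 1
          field_simp
        have hge := aux_log_ge (show (0:ℝ) ≤ a/((n:ℝ)+1) by positivity)
        have h2 : a/((n:ℝ)+1) / (1 + a/((n:ℝ)+1)) = a/((n:ℝ)+1+a) := by
          rw [div_div]
          congr 1
          field_simp
        rw [h2] at hge
        have h3 : Gf a ((n:ℝ)+1) ≤ -a := by
          unfold Gf
          rw [hlog]
          have h4 : ((n:ℝ)+1+a) * (a/((n:ℝ)+1+a)) = a := by field_simp
          nlinarith [mul_le_mul_of_nonneg_left hge (show (0:ℝ) ≤ (n:ℝ)+1+a by positivity)]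
        linarith
    _ = (1+a) * Real.log (1+a) - a := by
        unfold Gf
        rw [Real.log_one]
        ring
end Lseries

lemma tangent_bound {x : ℝ} (hx : 1 < x) :
    -Real.eulerMascheroniConstant * (x - 1) ≤ Real.log (Real.Gamma x) := by
  have hd : HasDerivAt (Real.log ∘ Real.Gamma) (-Real.eulerMascheroniConstant) 1 := by
    have := Real.hasDerivAt_Gamma_one.log (by rw [Real.Gamma_one]; norm_num)
    simpa [Real.Gamma_one, Function.comp_def] using this
  have hc : ConvexOn ℝ (Set.Ioi 0) (Real.log ∘ Real.Gamma) := Real.convexOn_log_Gamma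
  have h := hc.deriv_le_slope (Set.mem_Ioi.mpr one_pos) (Set.mem_Ioi.mpr (by linarith : (0:ℝ) < x))
    hx hd.differentiableAt
  rw [hd.deriv, slope_def_field] at h
  simp only [Function.comp_apply, Real.Gamma_one, Real.log_one, sub_zero] at h
  rw [le_div_iff₀ (by linarith : (0:ℝ) < x - 1)] at h
  linarith



lemma U_bound {x : ℝ} (hx : 1 < x) :
    (x - 1) * (Real.log x - 1) ≤ Real.log (Real.Gamma x) := by
  have hx0 : (0:ℝ) < x := by linarith
  set b : ℝ := x ^ (-x) with hb_def
  have hb : 0 < b := Real.rpow_pos_of_pos hx0 _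
  -- value of the lower integral
  have hval : ∫ t in Ioi (0:ℝ), t ^ (x-1) * Real.exp (-b * t ^ x)
      = x ^ (x - (1:ℝ)) := by
    rw [integral_rpow_mul_exp_neg_mul_rpow hx0 (by linarith) hb]
    have h1 : -(x - 1 + 1) / x = (-1 : ℝ) := by field_simp; ring
    rw [h1, show (x-1+1)/x = (1:ℝ) by field_simp; ring, Real.Gamma_one]
    rw [hb_def, Real.rpow_neg_one, ← Real.rpow_neg hx0.le, neg_neg, Real.rpow_sub hx0,
      Real.rpow_one]
    ring
  -- pointwise bound
  have hpt : ∀ t ∈ Ioi (0:ℝ),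
      Real.exp (1 - x) * (t ^ (x-1) * Real.exp (-b * t ^ x)) ≤ Real.exp (-t) * t ^ (x-1) := by
    intro t ht
    have ht0 : (0:ℝ) < t := ht
    have hber : 1 + x * (t/x - 1) ≤ (1 + (t/x - 1)) ^ x :=
      one_add_mul_self_le_rpow_one_add (by
        have : 0 < t/x := div_pos ht0 hx0
        linarith) hx.le
    have h2 : (1 + (t/x - 1)) = t / x := by ring
    rw [h2] at hber
    have h3 : (t/x) ^ x = b * t ^ x := by
      rw [Real.div_rpow ht0.le hx0.le, hb_def, Real.rpow_neg hx0.le]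
      ring
    rw [h3] at hber
    have h4 : 1 - x - b * t ^ x ≤ -t := by
      have : 1 + x * (t/x - 1) = 1 + t - x := by field_simp; ring
      rw [this] at hber
      linarith
    calc Real.exp (1 - x) * (t ^ (x-1) * Real.exp (-b * t ^ x))
        = t ^ (x-1) * Real.exp (1 - x - b * t ^ x) := by
          rw [show (1:ℝ) - x - b * t ^ x = (1-x) + (-b * t^x) by ring, Real.exp_add]; ring
      _ ≤ t ^ (x-1) * Real.exp (-t) := by
          have := Real.exp_le_exp.mpr h4
          have hpow : (0:ℝ) ≤ t ^ (x-1) := (Real.rpow_pos_of_pos ht0 _).le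
          nlinarith
      _ = Real.exp (-t) * t ^ (x-1) := by ring
  -- integral comparison
  have hmono : ∫ t in Ioi (0:ℝ), Real.exp (1 - x) * (t ^ (x-1) * Real.exp (-b * t ^ x))
      ≤ ∫ t in Ioi (0:ℝ), Real.exp (-t) * t ^ (x-1) := by
    refine integral_mono_of_nonneg ?_ (Real.GammaIntegral_convergent hx0) ?_
    · rw [Filter.EventuallyLE, ae_restrict_iff' measurableSet_Ioi]
      filter_upwards with t ht
      have ht0 : (0:ℝ) < t := ht
      positivity
    · rw [Filter.EventuallyLE, ae_restrict_iff' measurableSet_Ioi]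
      filter_upwards with t ht
      exact hpt t ht
  rw [MeasureTheory.integral_const_mul, hval] at hmono
  have hG : Real.Gamma x = ∫ t in Ioi (0:ℝ), Real.exp (-t) * t ^ (x-1) :=
    Real.Gamma_eq_integral hx0
  have hGe : Real.exp (1-x) * x ^ (x - (1:ℝ)) ≤ Real.Gamma x := by rw [hG]; exact hmono
  have hlog := Real.log_le_log (by positivity) hGe
  rw [Real.log_mul (Real.exp_ne_zero _) (Real.rpow_pos_of_pos hx0 _).ne',
    Real.log_exp, Real.log_rpow hx0] at hlog
  linarith

lemma key_sum {x : ℝ} (hx : 1 < x) (n : ℕ) :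
    ∑ k ∈ range n, ((x-1)/((k:ℝ)+1) - (Real.log (x+((k:ℝ)+1)) - Real.log ((k:ℝ)+2)))
      ≤ x * Real.log x := by
  have ha : 0 < x - 1 := by linarith
  set a := x - 1 with ha_def
  have hsplit : ∀ k ∈ range n,
      a/((k:ℝ)+1) - (Real.log (x+((k:ℝ)+1)) - Real.log ((k:ℝ)+2))
        = (a/((k:ℝ)+1) - a/((k:ℝ)+2))
          + (a/((k:ℝ)+2) - (Real.log ((k:ℝ)+2+a) - Real.log ((k:ℝ)+2))) := by
    intro k _
    have : x + ((k:ℝ)+1) = (k:ℝ)+2+a := by rw [ha_def]; ring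
    rw [this]
    ring
  rw [Finset.sum_congr rfl hsplit, Finset.sum_add_distrib]
  have h1 : ∑ k ∈ range n, (a/((k:ℝ)+1) - a/((k:ℝ)+2)) ≤ a := by
    have h := Finset.sum_range_sub' (fun k : ℕ => a/((k:ℝ)+1)) n
    have he : ∑ k ∈ range n, (a/((k:ℝ)+1) - a/((k:ℝ)+2))
        = ∑ k ∈ range n, (a/((k:ℝ)+1) - a/((↑(k+1):ℝ)+1)) := by
      apply Finset.sum_congr rfl
      intro k _
      push_cast
      ring_nf
    rw [he, h]
    have : (0:ℝ) ≤ a / ((n:ℝ)+1) := by positivity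
    norm_num
    linarith
  have h2 := sum_g_le ha n
  have hxa : 1 + a = x := by rw [ha_def]; ring
  rw [hxa] at h2
  linarith

lemma L_bound {x : ℝ} (hx : 1 < x) :
    Real.log (Real.Gamma x) ≤ (x-1) * (Real.log x - Real.eulerMascheroniConstant) := by
  have hx0 : (0:ℝ) < x := by linarith
  have htendG : Tendsto (fun n : ℕ => Real.log (Real.GammaSeq x n)) atTop
      (𝓝 (Real.log (Real.Gamma x))) :=
    (Real.GammaSeq_tendsto_Gamma x).log (Real.Gamma_pos_of_pos hx0).ne'
  -- the finite-n bound
  have bound : ∀ n : ℕ, 1 ≤ n → Real.log (Real.GammaSeq x n)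
      ≤ -Real.log x + x*Real.log x - (x-1)*((harmonic n : ℝ) - Real.log n)
        + (Real.log n - Real.log ((n:ℝ)+1)) := by
    intro n hn
    have hn0 : (0:ℝ) < n := by exact_mod_cast hn
    have hprod_pos : (0:ℝ) < ∏ j ∈ range (n+1), (x + (j:ℝ)) :=
      Finset.prod_pos (fun j _ => by positivity)
    have hfac_pos : (0:ℝ) < (Nat.factorial n : ℝ) := by exact_mod_cast Nat.factorial_pos n
    have hlogseq : Real.log (Real.GammaSeq x n)
        = x * Real.log n + ∑ k ∈ range n, Real.log ((k:ℝ)+1)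
          - (∑ k ∈ range n, Real.log (x+((k:ℝ)+1)) + Real.log x) := by
      have hfac : Real.log ((Nat.factorial n : ℕ) : ℝ) = ∑ k ∈ range n, Real.log ((k:ℝ)+1) := by
        rw [← Finset.prod_range_add_one_eq_factorial]
        push_cast
        rw [Real.log_prod (fun k _ => by positivity)]
      have hprod : Real.log (∏ j ∈ range (n+1), (x + (j:ℝ)))
          = ∑ k ∈ range n, Real.log (x+((k:ℝ)+1)) + Real.log x := by
        rw [Finset.prod_range_succ' (fun j : ℕ => x + (j:ℝ)) n]
        push_cast
        rw [Real.log_mul (by positivity) (by positivity), add_zero,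
          Real.log_prod (fun k _ => by positivity)]
      unfold Real.GammaSeq
      rw [Real.log_div (by positivity) hprod_pos.ne', Real.log_mul (by positivity) hfac_pos.ne',
        Real.log_rpow hn0, hfac, hprod]
    have hkey := key_sum hx n
    -- telescoping sum of logs
    have htel : ∑ k ∈ range n, (Real.log ((k:ℝ)+1) - Real.log ((k:ℝ)+2))
        = - Real.log ((n:ℝ)+1) := by
      have h := Finset.sum_range_sub' (fun k : ℕ => Real.log ((k:ℝ)+1)) n
      have he : ∑ k ∈ range n, (Real.log ((k:ℝ)+1) - Real.log ((k:ℝ)+2))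
          = ∑ k ∈ range n, (Real.log ((k:ℝ)+1) - Real.log ((↑(k+1):ℝ)+1)) := by
        apply Finset.sum_congr rfl
        intro k _
        push_cast
        ring_nf
      rw [he, h]
      norm_num
    have hharm : (harmonic n : ℝ) = ∑ k ∈ range n, 1/((k:ℝ)+1) := by
      rw [harmonic]
      push_cast
      apply Finset.sum_congr rfl
      intro k _
      rw [one_div]
    have hsum23 : ∑ k ∈ range n, Real.log ((k:ℝ)+2)
        = ∑ k ∈ range n, Real.log ((k:ℝ)+1) + Real.log ((n:ℝ)+1) := by
      rw [Finset.sum_sub_distrib] at htel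
      linarith
    have expand : ∑ k ∈ range n, ((x-1)/((k:ℝ)+1) - (Real.log (x+((k:ℝ)+1))
        - Real.log ((k:ℝ)+2)))
        = (x-1) * (harmonic n : ℝ) - ∑ k ∈ range n, Real.log (x+((k:ℝ)+1))
          + ∑ k ∈ range n, Real.log ((k:ℝ)+2) := by
      rw [hharm, Finset.mul_sum, ← Finset.sum_sub_distrib, ← Finset.sum_add_distrib]
      apply Finset.sum_congr rfl
      intro k _
      rw [mul_one_div]
      ring
    rw [expand, hsum23] at hkey
    rw [hlogseq]
    nlinarith [hkey]
  -- limits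
  have hT1 : Tendsto (fun n : ℕ => (harmonic n : ℝ) - Real.log n) atTop
      (𝓝 Real.eulerMascheroniConstant) := Real.tendsto_harmonic_sub_log
  have hT2 : Tendsto (fun n : ℕ => Real.log n - Real.log ((n:ℝ)+1)) atTop (𝓝 0) := by
    have ha : Tendsto (fun n : ℕ => 1 + 1/(n:ℝ)) atTop (𝓝 1) := by
      have := tendsto_one_div_atTop_nhds_zero_nat (𝕜 := ℝ)
      have h2 := this.const_add (1:ℝ)
      simpa using h2
    have hb : Tendsto (fun n : ℕ => -Real.log (1 + 1/(n:ℝ))) atTop (𝓝 0) := by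
      have := (ha.log one_ne_zero).neg
      simpa using this
    apply hb.congr'
    filter_upwards [eventually_ge_atTop 1] with n hn
    have hn0 : (0:ℝ) < n := by exact_mod_cast hn
    rw [show 1 + 1/(n:ℝ) = ((n:ℝ)+1)/n by field_simp, Real.log_div (by positivity) hn0.ne']
    ring
  have hT : Tendsto (fun n : ℕ => -Real.log x + x*Real.log x
      - (x-1)*((harmonic n : ℝ) - Real.log n) + (Real.log n - Real.log ((n:ℝ)+1))) atTop
      (𝓝 (-Real.log x + x*Real.log x - (x-1)*Real.eulerMascheroniConstant + 0)) := by
    exact (tendsto_const_nhds.sub (hT1.const_mul (x-1))).add hT2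
  have hev : (fun n : ℕ => Real.log (Real.GammaSeq x n)) ≤ᶠ[atTop]
      (fun n : ℕ => -Real.log x + x*Real.log x
        - (x-1)*((harmonic n : ℝ) - Real.log n) + (Real.log n - Real.log ((n:ℝ)+1))) := by
    filter_upwards [eventually_ge_atTop 1] with n hn using bound n hn
  have hle := le_of_tendsto_of_tendsto htendG hT hev
  nlinarith [hle]

lemma flog : ∀ n : ℕ, 1 ≤ n →
    Real.log (Nat.factorial n : ℝ) ≤ n * Real.log n - n + Real.log n + 1 := by
  intro n hn
  induction n, hn using Nat.le_induction with
  | base => simp [Nat.factorial]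
  | succ n hn ih =>
    have hn0 : (0:ℝ) < n := by exact_mod_cast hn
    have hfact : Real.log (Nat.factorial (n+1) : ℝ)
        = Real.log ((n:ℝ)+1) + Real.log (Nat.factorial n : ℝ) := by
      rw [Nat.factorial_succ]
      push_cast
      rw [Real.log_mul (by positivity) (by positivity)]
    have hlg : Real.log ((n:ℝ)+1) - Real.log n ≥ 1/((n:ℝ)+1) := by
      have h := aux_log_ge (show (0:ℝ) ≤ 1/(n:ℝ) by positivity)
      have e1 : (1:ℝ)/(n:ℝ) / (1 + 1/(n:ℝ)) = 1/((n:ℝ)+1) := by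
        field_simp
      have e2 : Real.log (1 + 1/(n:ℝ)) = Real.log ((n:ℝ)+1) - Real.log n := by
        rw [show (1:ℝ) + 1/(n:ℝ) = ((n:ℝ)+1)/n by field_simp,
          Real.log_div (by positivity) hn0.ne']
      rw [e1, e2] at h
      linarith
    have goal2 : ((n:ℝ)+1) * (Real.log ((n:ℝ)+1) - Real.log n) ≥ 1 := by
      have := mul_le_mul_of_nonneg_left hlg (show (0:ℝ) ≤ (n:ℝ)+1 by positivity)
      have e : ((n:ℝ)+1) * (1/((n:ℝ)+1)) = 1 := by field_simp
      nlinarith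
    rw [hfact]
    push_cast
    nlinarith [ih]

lemma mono_xlogx : MonotoneOn (fun t : ℝ => t * Real.log t - t) (Ici 1) := by
  have hd : ∀ t ∈ interior (Ici (1:ℝ)), HasDerivAt (fun t : ℝ => t * Real.log t - t)
      (Real.log t) t := by
    intro t ht
    rw [interior_Ici, Set.mem_Ioi] at ht
    have h1 : t ≠ 0 := by linarith
    have h2 := (Real.hasDerivAt_mul_log h1).sub (hasDerivAt_id t)
    have h3 : HasDerivAt (fun t : ℝ => t * Real.log t - t) (Real.log t + 1 - 1) t := h2
    convert h3 using 1
    ring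
  apply monotoneOn_of_deriv_nonneg (convex_Ici 1)
  · exact (Real.continuous_mul_log.sub continuous_id).continuousOn
  · intro t ht
    exact ((hd t ht).differentiableAt).differentiableWithinAt
  · intro t ht
    rw [(hd t ht).deriv]
    rw [interior_Ici, Set.mem_Ioi] at ht
    exact Real.log_nonneg ht.le

lemma C_bound {x : ℝ} (hx : 2 ≤ x) :
    Real.log (Real.Gamma x) ≤ x * Real.log x - x + Real.log x + 1 := by
  set n : ℕ := ⌊x⌋₊ with hn_def
  have hx0 : (0:ℝ) < x := by linarith
  have hn2 : 2 ≤ n := Nat.le_floor (by exact_mod_cast hx)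
  have hn0 : (0:ℝ) < n := by
    have : (2:ℝ) ≤ n := by exact_mod_cast hn2
    linarith
  have hxn : (n:ℝ) ≤ x := Nat.floor_le hx0.le
  have hxn1 : x ≤ (n:ℝ) + 1 := (Nat.lt_floor_add_one x).le
  have hseg : x ∈ segment ℝ ((n:ℝ)) ((n:ℝ)+1) := by
    rw [segment_eq_Icc (by linarith : (n:ℝ) ≤ (n:ℝ)+1)]
    exact ⟨hxn, hxn1⟩
  have hmax := Real.convexOn_log_Gamma.le_on_segment (mem_Ioi.mpr hn0)
    (mem_Ioi.mpr (by linarith : (0:ℝ) < (n:ℝ)+1)) hseg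
  have hGn : Real.Gamma ((n:ℝ)) = (Nat.factorial (n-1) : ℝ) := by
    have h1 : ((n:ℝ)) = ((n-1 : ℕ) : ℝ) + 1 := by
      push_cast [Nat.cast_sub (show 1 ≤ n by omega)]
      ring
    rw [h1, Real.Gamma_nat_eq_factorial]
  have hGn1 : Real.Gamma ((n:ℝ)+1) = (Nat.factorial n : ℝ) := Real.Gamma_nat_eq_factorial n
  have hfacmono : (Nat.factorial (n-1) : ℝ) ≤ (Nat.factorial n : ℝ) := by
    exact_mod_cast Nat.factorial_le (by omega)
  have hfles : Real.log (Real.Gamma x) ≤ Real.log (Nat.factorial n : ℝ) := by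
    have hmax' : Real.log (Real.Gamma x)
        ≤ max (Real.log (Real.Gamma ((n:ℝ)))) (Real.log (Real.Gamma ((n:ℝ)+1))) := by
      simpa [Function.comp] using hmax
    refine hmax'.trans (max_le ?_ ?_)
    · rw [hGn]
      exact Real.log_le_log (by exact_mod_cast Nat.factorial_pos (n-1)) hfacmono
    · rw [hGn1]
  have hflog := flog n (by omega)
  have hmono : (n:ℝ) * Real.log n - n ≤ x * Real.log x - x :=
    mono_xlogx (by rw [Set.mem_Ici]; linarith : (n:ℝ) ∈ Ici (1:ℝ))
      (by rw [Set.mem_Ici]; linarith : x ∈ Ici (1:ℝ)) hxn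
  have hlogmono : Real.log n ≤ Real.log x := Real.log_le_log hn0 hxn
  linarith


theorem stmt19 :
    (∀ γ : ℝ, γ < 0 →
      (1 - γ) * Real.Gamma (1 - γ) ^ (1/γ)
        ∈ Set.Icc (Real.exp Real.eulerMascheroniConstant) (Real.exp 1)) ∧
    Filter.Tendsto (fun γ : ℝ => (1 - γ) * Real.Gamma (1 - γ) ^ (1/γ))
      (nhdsWithin 0 (Set.Iio 0)) (nhds (Real.exp Real.eulerMascheroniConstant)) ∧
    Filter.Tendsto (fun γ : ℝ => (1 - γ) * Real.Gamma (1 - γ) ^ (1/γ))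
      Filter.atBot (nhds (Real.exp 1)) := by
  set γ5 := Real.eulerMascheroniConstant with hγ5
  set W : ℝ → ℝ := fun γ => Real.log (1-γ) + Real.log (Real.Gamma (1-γ)) / γ with hW_def
  have hW : ∀ γ : ℝ, γ < 0 → (1-γ) * Real.Gamma (1-γ) ^ (1/γ) = Real.exp (W γ) := by
    intro γ hγ
    have hx : (0:ℝ) < 1 - γ := by linarith
    have hg : 0 < Real.Gamma (1-γ) := Real.Gamma_pos_of_pos hx
    rw [Real.rpow_def_of_pos hg, hW_def]
    simp only
    rw [Real.exp_add, Real.exp_log hx]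
    congr 1
    rw [mul_one_div]
  have hx1 : ∀ γ : ℝ, γ < 0 → (1:ℝ) < 1 - γ := fun γ hγ => by linarith
  -- lower bound γ5 ≤ W γ
  have hWlow : ∀ γ : ℝ, γ < 0 → γ5 ≤ W γ := by
    intro γ hγ
    have hL := L_bound (hx1 γ hγ)
    have h2 : -(Real.log (1-γ) - γ5) ≤ Real.log (Real.Gamma (1-γ)) / γ := by
      rw [le_div_iff_of_neg hγ]
      have e : -(Real.log (1-γ) - γ5) * γ = (1-γ-1) * (Real.log (1-γ) - γ5) := by ring
      rw [e]
      exact hL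
    have hWγ : W γ = Real.log (1-γ) + Real.log (Real.Gamma (1-γ)) / γ := rfl
    rw [hWγ]
    linarith
  -- upper bound W γ ≤ 1
  have hWhigh1 : ∀ γ : ℝ, γ < 0 → W γ ≤ 1 := by
    intro γ hγ
    have hU := U_bound (hx1 γ hγ)
    have h2 : Real.log (Real.Gamma (1-γ)) / γ ≤ 1 - Real.log (1-γ) := by
      rw [div_le_iff_of_neg hγ]
      have e : (1 - Real.log (1-γ)) * γ = (1-γ-1) * (Real.log (1-γ) - 1) := by ring
      rw [e]
      exact hU
    have hWγ : W γ = Real.log (1-γ) + Real.log (Real.Gamma (1-γ)) / γ := rfl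
    rw [hWγ]
    linarith
  -- tangent upper bound
  have hWhigh2 : ∀ γ : ℝ, γ < 0 → W γ ≤ Real.log (1-γ) + γ5 := by
    intro γ hγ
    have hT := tangent_bound (hx1 γ hγ)
    have h2 : Real.log (Real.Gamma (1-γ)) / γ ≤ γ5 := by
      rw [div_le_iff_of_neg hγ]
      have e : γ5 * γ = -γ5 * (1-γ-1) := by ring
      rw [e]
      exact hT
    have hWγ : W γ = Real.log (1-γ) + Real.log (Real.Gamma (1-γ)) / γ := rfl
    rw [hWγ]
    linarith
  -- chord lower bound for γ ≤ -1
  have hWlow2 : ∀ γ : ℝ, γ ≤ -1 → 1 - 2*Real.log (1-γ)/(-γ) ≤ W γ := by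
    intro γ hγ
    have hγ0 : γ < 0 := by linarith
    have hC := C_bound (show (2:ℝ) ≤ 1 - γ by linarith)
    have h2 : 1 - Real.log (1-γ) - 2*Real.log (1-γ)/(-γ) ≤ Real.log (Real.Gamma (1-γ)) / γ := by
      rw [le_div_iff_of_neg hγ0]
      have hne : γ ≠ 0 := ne_of_lt hγ0
      have e : (1 - Real.log (1-γ) - 2*Real.log (1-γ)/(-γ)) * γ
          = (1-γ) * Real.log (1-γ) - (1-γ) + Real.log (1-γ) + 1 := by
        rw [div_neg]
        field_simp
        try ring
      rw [e]
      exact hC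
    have hWγ : W γ = Real.log (1-γ) + Real.log (Real.Gamma (1-γ)) / γ := rfl
    rw [hWγ]
    linarith
  refine ⟨?_, ?_, ?_⟩
  · -- part 1
    intro γ hγ
    rw [hW γ hγ]
    exact ⟨Real.exp_le_exp.mpr (hWlow γ hγ), Real.exp_le_exp.mpr (hWhigh1 γ hγ)⟩
  · -- part 2
    have hmem : ∀ᶠ γ : ℝ in nhdsWithin 0 (Set.Iio 0), γ < 0 := by
      filter_upwards [eventually_mem_nhdsWithin] with γ hγ using hγ
    have hup : Tendsto (fun γ : ℝ => Real.log (1-γ) + γ5) (nhdsWithin 0 (Set.Iio 0)) (𝓝 γ5) := by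
      have hcont : ContinuousAt (fun γ : ℝ => Real.log (1-γ) + γ5) 0 := by
        apply ContinuousAt.add _ continuousAt_const
        apply ContinuousAt.comp (Real.continuousAt_log (by norm_num))
        exact (continuous_const.sub continuous_id).continuousAt
      have := hcont.tendsto
      simp only [sub_zero, Real.log_one, zero_add] at this
      exact this.mono_left nhdsWithin_le_nhds
    have hWt : Tendsto W (nhdsWithin 0 (Set.Iio 0)) (𝓝 γ5) := by
      apply tendsto_of_tendsto_of_tendsto_of_le_of_le' tendsto_const_nhds hup
      · filter_upwards [hmem] with γ hγ using hWlow γ hγ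
      · filter_upwards [hmem] with γ hγ using hWhigh2 γ hγ
    have hexp : Tendsto (fun γ : ℝ => Real.exp (W γ)) (nhdsWithin 0 (Set.Iio 0))
        (𝓝 (Real.exp γ5)) := (Real.continuous_exp.tendsto γ5).comp hWt
    apply hexp.congr'
    filter_upwards [hmem] with γ hγ using (hW γ hγ).symm
  · -- part 3
    have hmem : ∀ᶠ γ : ℝ in (atBot : Filter ℝ), γ ≤ -1 := eventually_le_atBot (-1)
    have h1 : Tendsto (fun γ : ℝ => 1 - γ) atBot atTop := by
      apply tendsto_atTop.mpr
      intro b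
      filter_upwards [eventually_le_atBot (1-b)] with γ h using by linarith
    have h2 : Tendsto (fun y : ℝ => Real.log y / y) atTop (𝓝 0) :=
      Real.isLittleO_log_id_atTop.tendsto_div_nhds_zero
    have hcomp : Tendsto (fun γ : ℝ => Real.log (1-γ)/(1-γ)) atBot (𝓝 0) := h2.comp h1
    have h3 : Tendsto (fun γ : ℝ => (1-γ)/(-γ)) atBot (𝓝 1) := by
      have hinv : Tendsto (fun γ : ℝ => γ⁻¹) atBot (𝓝 0) := by
        have hneg : Tendsto (fun γ : ℝ => -γ) atBot atTop := by
          apply tendsto_atTop.mpr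
          intro b
          filter_upwards [eventually_le_atBot (-b)] with γ h using by linarith
        have h := (hneg.inv_tendsto_atTop).neg
        rw [neg_zero] at h
        apply h.congr
        intro γ
        simp only [Pi.inv_apply, inv_neg, neg_neg]
      have hone : Tendsto (fun _ : ℝ => (1:ℝ)) atBot (𝓝 (1:ℝ)) := tendsto_const_nhds
      have := hone.sub hinv
      rw [sub_zero] at this
      apply this.congr'
      filter_upwards [eventually_lt_atBot (0:ℝ)] with γ hγ
      have hne : γ ≠ 0 := ne_of_lt hγ
      rw [eq_div_iff (neg_ne_zero.mpr hne)]
      field_simp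
      ring
    have hratio : Tendsto (fun γ : ℝ => Real.log (1-γ)/(-γ)) atBot (𝓝 0) := by
      have := hcomp.mul h3
      rw [zero_mul] at this
      apply this.congr'
      filter_upwards [eventually_lt_atBot (0:ℝ)] with γ hγ
      have hx : (1-γ) ≠ 0 := by linarith
      field_simp
    have hl : Tendsto (fun γ : ℝ => 1 - 2*Real.log (1-γ)/(-γ)) atBot (𝓝 1) := by
      have h4 : Tendsto (fun γ : ℝ => 2 * (Real.log (1-γ)/(-γ))) atBot (𝓝 (2*0)) :=
        hratio.const_mul 2
      rw [mul_zero] at h4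
      have hone : Tendsto (fun _ : ℝ => (1:ℝ)) atBot (𝓝 (1:ℝ)) := tendsto_const_nhds
      have := hone.sub h4
      rw [sub_zero] at this
      apply this.congr
      intro γ
      ring
    have hWt : Tendsto W atBot (𝓝 1) := by
      apply tendsto_of_tendsto_of_tendsto_of_le_of_le' hl tendsto_const_nhds
      · filter_upwards [hmem] with γ hγ using hWlow2 γ hγ
      · filter_upwards [hmem] with γ hγ using hWhigh1 γ (by linarith)
    have hexp : Tendsto (fun γ : ℝ => Real.exp (W γ)) atBot (𝓝 (Real.exp 1)) :=
      (Real.continuous_exp.tendsto 1).comp hWt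
    apply hexp.congr'
    filter_upwards [eventually_lt_atBot (0:ℝ)] with γ hγ using (hW γ hγ).symm
end
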